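/- arXiv:2407.16003 — 3 statements merged into one kernel-verified Lean document; each statement's English description precedes it below -/
import Mathlib

section
/- Let m ≥ 3 and let G be a subgroup of Equiv.Perm (Fin m × Fin 2) all of whose elements are block-preserving, and let K = {g ∈ G : g is block-fixing} (the kernel in G of the induced homomorphism f). If the image {f g : g ∈ G} is either all of Equiv.Perm (Fin m) or equal to alternatingGroup (Fin m), then Nat.card K ∈ {1, 2, 2^(m−1), 2^m}. -/
/-- A permutation of `Fin m × Fin 2` is block-preserving if it permutes the
blocks `{a} × Fin 2`. -/
def IsBlockPreserving {m : ℕ} (σ : Equiv.Perm (Fin m × Fin 2)) : Prop :=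
  ∀ a : Fin m, (σ (a, 0)).1 = (σ (a, 1)).1

/-- A permutation of `Fin m × Fin 2` is block-fixing if it fixes every
block `{a} × Fin 2` setwise, i.e. it lies in the kernel of the induced map
to `Equiv.Perm (Fin m)`. -/
def IsBlockFixing {m : ℕ} (σ : Equiv.Perm (Fin m × Fin 2)) : Prop :=
  ∀ (a : Fin m) (i : Fin 2), (σ (a, i)).1 = a

namespace Stmt5Aux
lemma ftwo : ∀ x : Fin 2, x + x = 0 := by decide
lemma fadd : ∀ x y : Fin 2, x + y + y = x := by decide
lemma fne : ∀ x y : Fin 2, x ≠ y → x = 1 + y := by decide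
lemma fmix : ∀ i c w : Fin 2, ((i + c) + w) + c = i + w := by decide
lemma fswap : ∀ i a b : Fin 2, i + (a + b) = (i + b) + a := by decide
lemma ftwocases : ∀ k : Fin 2, k = 0 ∨ k = 1 := by decide

def tau {m : ℕ} (v : Fin m → Fin 2) : Equiv.Perm (Fin m × Fin 2) where
  toFun p := (p.1, p.2 + v p.1)
  invFun p := (p.1, p.2 + v p.1)
  left_inv := by rintro ⟨a, i⟩; simp [fadd]
  right_inv := by rintro ⟨a, i⟩; simp [fadd]

lemma tau_apply {m : ℕ} (v : Fin m → Fin 2) (p : Fin m × Fin 2) :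
    tau v p = (p.1, p.2 + v p.1) := rfl

lemma tau_zero {m : ℕ} : tau (0 : Fin m → Fin 2) = 1 := by
  apply Equiv.ext; rintro ⟨a, i⟩
  simp [tau_apply]

lemma tau_add {m : ℕ} (v w : Fin m → Fin 2) : tau (v + w) = tau v * tau w := by
  apply Equiv.ext; rintro ⟨a, i⟩
  rw [Equiv.Perm.mul_apply, tau_apply, tau_apply, tau_apply]
  exact Prod.ext rfl (fswap i (v a) (w a))

lemma tau_blockfixing {m : ℕ} (v : Fin m → Fin 2) : IsBlockFixing (tau v) :=
  fun _ _ => rfl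

lemma gform {m : ℕ} (g : Equiv.Perm (Fin m × Fin 2)) (hbp : IsBlockPreserving g)
    (π : Equiv.Perm (Fin m)) (hπ : ∀ a, (g (a, 0)).1 = π a) :
    ∀ b (j : Fin 2), g (b, j) = (π b, j + (g (b, 0)).2) := by
  intro b j
  rcases ftwocases j with rfl | rfl
  · rw [zero_add]
    exact Prod.ext (hπ b) rfl
  · have h1 : (g (b, 1)).1 = π b := by rw [← hbp b]; exact hπ b
    have hne : g (b, 1) ≠ g (b, 0) := g.injective.ne (by simp)
    have h2 : (g (b, 1)).2 ≠ (g (b, 0)).2 := by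
      intro h
      exact hne (Prod.ext (by rw [h1, hπ b]) h)
    exact Prod.ext h1 (fne _ _ h2)

lemma tau_of_blockfixing {m : ℕ} (g : Equiv.Perm (Fin m × Fin 2)) (hbf : IsBlockFixing g) :
    tau (fun a => (g (a, 0)).2) = g := by
  have hbp : IsBlockPreserving g := fun a => by rw [hbf a 0, hbf a 1]
  have hπ : ∀ a, (g (a, 0)).1 = (1 : Equiv.Perm (Fin m)) a := fun a => hbf a 0
  apply Equiv.ext; rintro ⟨a, i⟩
  rw [tau_apply, gform g hbp 1 hπ a i]
  rfl
lemma fpaircancel : ∀ a b c : Fin 2, (a + b) + (b + c) = a + c := by decide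

def pr {m : ℕ} (x y : Fin m) : Fin m → Fin 2 :=
  fun a => (if a = x then 1 else 0) + (if a = y then 1 else 0)

lemma pr_comm {m : ℕ} (x y : Fin m) : pr x y = pr y x := by
  funext a; exact add_comm _ _

lemma pr_add {m : ℕ} (x y z : Fin m) : pr x y + pr y z = pr x z := by
  funext a
  exact fpaircancel _ _ _

lemma pr_apply_left {m : ℕ} {x y : Fin m} (h : x ≠ y) : pr x y x = 1 := by
  simp [pr, h]

lemma pr_apply_right {m : ℕ} {x y : Fin m} (h : x ≠ y) : pr x y y = 1 := by
  simp [pr, h.symm]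

lemma pr_apply_other {m : ℕ} {x y a : Fin m} (hx : a ≠ x) (hy : a ≠ y) : pr x y a = 0 := by
  simp [pr, hx, hy]

lemma pr_comp {m : ℕ} (x y : Fin m) (σ : Equiv.Perm (Fin m)) :
    (fun a => pr x y (σ a)) = pr (σ⁻¹ x) (σ⁻¹ y) := by
  funext a
  have h1 : (σ a = x) = (a = σ⁻¹ x) := by
    simp [Equiv.Perm.inv_def, Equiv.apply_eq_iff_eq_symm_apply]
  have h2 : (σ a = y) = (a = σ⁻¹ y) := by
    simp [Equiv.Perm.inv_def, Equiv.apply_eq_iff_eq_symm_apply]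
  simp only [pr, h1, h2]

lemma sum_pr {m : ℕ} {x y : Fin m} (h : x ≠ y) : ∑ a, pr x y a = 0 := by
  simp [pr, Finset.sum_add_distrib, Finset.sum_ite_eq']

-- even permutation: product of two swaps
def cyc {m : ℕ} (x y z : Fin m) : Equiv.Perm (Fin m) := Equiv.swap x z * Equiv.swap x y

lemma cyc_sign {m : ℕ} {x y z : Fin m} (hxy : x ≠ y) (hxz : x ≠ z) :
    Equiv.Perm.sign (cyc x y z) = 1 := by
  rw [cyc, map_mul, Equiv.Perm.sign_swap hxz, Equiv.Perm.sign_swap hxy]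
  decide

lemma cyc_apply_x {m : ℕ} {x y z : Fin m} (hxy : x ≠ y) (hyz : y ≠ z) :
    cyc x y z x = y := by
  simp [cyc, Equiv.Perm.mul_apply, Equiv.swap_apply_left,
    Equiv.swap_apply_of_ne_of_ne hxy.symm hyz]

lemma cyc_apply_y {m : ℕ} {x y z : Fin m} (hxy : x ≠ y) :
    cyc x y z y = z := by
  simp [cyc, Equiv.Perm.mul_apply, Equiv.swap_apply_right, hxy.symm, Equiv.swap_apply_left]

lemma cyc_apply_z {m : ℕ} {x y z : Fin m} (hxz : x ≠ z) (hyz : y ≠ z) :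
    cyc x y z z = x := by
  simp [cyc, Equiv.Perm.mul_apply, Equiv.swap_apply_of_ne_of_ne hxz.symm hyz.symm,
    Equiv.swap_apply_right]

lemma cyc_apply_other {m : ℕ} {x y z t : Fin m} (hx : t ≠ x) (hy : t ≠ y) (hz : t ≠ z) :
    cyc x y z t = t := by
  simp [cyc, Equiv.Perm.mul_apply, Equiv.swap_apply_of_ne_of_ne hx hy,
    Equiv.swap_apply_of_ne_of_ne hx hz]

def sumHom (m : ℕ) : (Fin m → Fin 2) →+ Fin 2 where
  toFun v := ∑ a, v a
  map_zero' := by simp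
  map_add' v w := by simp [Finset.sum_add_distrib]

lemma card_sumzero {m : ℕ} (hm : 1 ≤ m) :
    Nat.card {v : Fin m → Fin 2 // (∑ a, v a) = 0} = 2 ^ (m - 1) := by
  classical
  have hsurj : Function.Surjective (sumHom m) := by
    intro y
    refine ⟨fun a => if a = ⟨0, hm⟩ then y else 0, ?_⟩
    show (∑ a, if a = (⟨0, hm⟩ : Fin m) then y else 0) = y
    simp [Finset.sum_ite_eq']
  have h1 : Nat.card (Fin m → Fin 2) =
      Nat.card ((Fin m → Fin 2) ⧸ (sumHom m).ker) * Nat.card (sumHom m).ker :=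
    AddSubgroup.card_eq_card_quotient_mul_card_addSubgroup (sumHom m).ker
  have h2 : Nat.card ((Fin m → Fin 2) ⧸ (sumHom m).ker) = 2 := by
    rw [Nat.card_congr (QuotientAddGroup.quotientKerEquivOfSurjective (sumHom m) hsurj).toEquiv]
    simp [Nat.card_eq_fintype_card]
  have h3 : Nat.card (Fin m → Fin 2) = 2 ^ m := by
    simp [Nat.card_eq_fintype_card]
  have h4 : Nat.card {v : Fin m → Fin 2 // (∑ a, v a) = 0} = Nat.card (sumHom m).ker := by
    apply Nat.card_congr
    exact Equiv.subtypeEquivRight (fun v => ((sumHom m).mem_ker (x := v)).symm)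
  have h5 : 2 ^ m = 2 ^ (m - 1) * 2 := by
    rw [← pow_succ, Nat.sub_add_cancel hm]
  rw [h3, h2, h5] at h1
  rw [h4]
  clear h4 h3 h2 hsurj
  omega
end Stmt5Aux

open Stmt5Aux

theorem stmt5 {m : ℕ} (hm : 3 ≤ m) (G : Subgroup (Equiv.Perm (Fin m × Fin 2)))
    (hBP : ∀ g ∈ G, IsBlockPreserving g)
    -- the image of f is Sym_m or Alt_m
    (hIm : {π : Equiv.Perm (Fin m) | ∃ g ∈ G, ∀ a, (g (a, 0)).1 = π a} = Set.univ ∨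
      {π : Equiv.Perm (Fin m) | ∃ g ∈ G, ∀ a, (g (a, 0)).1 = π a} =
        ↑(alternatingGroup (Fin m))) :
    Nat.card {g : Equiv.Perm (Fin m × Fin 2) // g ∈ G ∧ IsBlockFixing g} ∈
      ({1, 2, 2 ^ (m - 1), 2 ^ m} : Set ℕ) := by
  classical
  -- transfer to vectors
  have ecard : Nat.card {g : Equiv.Perm (Fin m × Fin 2) // g ∈ G ∧ IsBlockFixing g}
      = Nat.card {v : Fin m → Fin 2 // tau v ∈ G} := by
    apply Nat.card_congr
    refine ⟨fun g => ⟨fun a => (g.1 (a, 0)).2, ?_⟩,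
      fun v => ⟨tau v.1, v.2, tau_blockfixing v.1⟩, ?_, ?_⟩
    · rw [tau_of_blockfixing g.1 g.2.2]; exact g.2.1
    · rintro ⟨g, hg, hbf⟩
      exact Subtype.ext (tau_of_blockfixing g hbf)
    · rintro ⟨v, hv⟩
      apply Subtype.ext
      funext a
      show (tau v (a, 0)).2 = v a
      rw [tau_apply]
      exact zero_add _
  rw [ecard]
  have hP0 : tau (0 : Fin m → Fin 2) ∈ G := by rw [tau_zero]; exact one_mem G
  have hPadd : ∀ v w : Fin m → Fin 2, tau v ∈ G → tau w ∈ G →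
      tau (v + w) ∈ G := by
    intro v w hv hw; rw [tau_add]; exact mul_mem hv hw
  have hinv' : ∀ (π : Equiv.Perm (Fin m)) (g : Equiv.Perm (Fin m × Fin 2)), g ∈ G →
      (∀ a, (g (a, 0)).1 = π a) →
      ∀ a i, g⁻¹ (a, i) = (π⁻¹ a, i + (g (π⁻¹ a, 0)).2) := by
    intro π g hg hπ a i
    apply g.injective
    rw [show g (g⁻¹ (a, i)) = (a, i) from Equiv.apply_symm_apply g (a, i), gform g (hBP g hg) π hπ]
    exact Prod.ext (π.apply_symm_apply a).symm (fadd i _).symm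
  have hconj : ∀ π : Equiv.Perm (Fin m), (∃ g ∈ G, ∀ a, (g (a, 0)).1 = π a) →
      ∀ v : Fin m → Fin 2, tau v ∈ G → tau (fun a => v (π⁻¹ a)) ∈ G := by
    rintro π ⟨g, hg, hπ⟩ v hv
    have hf := gform g (hBP g hg) π hπ
    have key : tau (fun a => v (π⁻¹ a)) = g * tau v * g⁻¹ := by
      apply Equiv.ext; rintro ⟨a, i⟩
      rw [Equiv.Perm.mul_apply, Equiv.Perm.mul_apply, hinv' π g hg hπ]
      show (a, i + v (π⁻¹ a)) =
        g (π⁻¹ a, (i + (g (π⁻¹ a, 0)).2) + v (π⁻¹ a))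
      rw [hf]
      exact Prod.ext (π.apply_symm_apply a).symm (fmix i _ _).symm
    rw [key]
    exact mul_mem (mul_mem hg hv) (inv_mem hg)
  have hSinv : ∀ π : Equiv.Perm (Fin m), (∃ g ∈ G, ∀ a, (g (a, 0)).1 = π a) →
      (∃ g ∈ G, ∀ a, (g (a, 0)).1 = π⁻¹ a) := by
    rintro π ⟨g, hg, hπ⟩
    exact ⟨g⁻¹, inv_mem hg, fun a => by rw [hinv' π g hg hπ]⟩
  have hsign : ∀ σ : Equiv.Perm (Fin m), Equiv.Perm.sign σ = 1 →
      ∃ g ∈ G, ∀ a, (g (a, 0)).1 = σ a := by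
    intro σ hσ
    rcases hIm with h | h
    · have : σ ∈ {π : Equiv.Perm (Fin m) | ∃ g ∈ G, ∀ a, (g (a, 0)).1 = π a} := by
        rw [h]; trivial
      exact this
    · have : σ ∈ {π : Equiv.Perm (Fin m) | ∃ g ∈ G, ∀ a, (g (a, 0)).1 = π a} := by
        rw [h]
        exact SetLike.mem_coe.mpr (Equiv.Perm.mem_alternatingGroup.mpr hσ)
      exact this
  have hmap : ∀ σ : Equiv.Perm (Fin m), Equiv.Perm.sign σ = 1 →
      ∀ v : Fin m → Fin 2, tau v ∈ G → tau (fun a => v (σ a)) ∈ G := by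
    intro σ hσ v hv
    have h1 := hconj σ⁻¹ (hsign σ⁻¹ (by rw [Equiv.Perm.sign_inv, hσ])) v hv
    simpa only [inv_inv] using h1
  have hprmap : ∀ x y : Fin m, tau (pr x y) ∈ G →
      ∀ σ : Equiv.Perm (Fin m), Equiv.Perm.sign σ = 1 → tau (pr (σ x) (σ y)) ∈ G := by
    intro x y hp σ hσ
    have h1 := hmap σ⁻¹ (by rw [Equiv.Perm.sign_inv, hσ]) _ hp
    rw [pr_comp] at h1
    simpa only [inv_inv] using h1
  have hspread : (∃ x y : Fin m, x ≠ y ∧ tau (pr x y) ∈ G) →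
      ∀ u w : Fin m, u ≠ w → tau (pr u w) ∈ G := by
    rintro ⟨x, y, hxy, hp⟩ u w huw
    have claim1 : ∀ z, z ≠ x → tau (pr x z) ∈ G := by
      intro z hz
      by_cases hzy : z = y
      · subst hzy; exact hp
      · have h1 : tau (pr y z) ∈ G := by
          have h2 := hprmap x y hp (cyc x y z) (cyc_sign hxy (Ne.symm hz))
          rwa [cyc_apply_x hxy (Ne.symm hzy), cyc_apply_y hxy] at h2
        have h3 := hPadd _ _ hp h1
        rwa [pr_add] at h3
    by_cases hux : u = x
    · subst hux; exact claim1 w (Ne.symm huw)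
    · by_cases hwx : w = x
      · subst hwx
        rw [pr_comm]
        exact claim1 u hux
      · have h1 : tau (pr u x) ∈ G := by rw [pr_comm]; exact claim1 u hux
        have h2 := claim1 w hwx
        have h3 := hPadd _ _ h1 h2
        rwa [pr_add] at h3
  -- case analysis
  by_cases hconst : ∀ v : Fin m → Fin 2, tau v ∈ G → ∀ a b, v a = v b
  · -- every element is constant
    have hsub : ∀ v : Fin m → Fin 2, tau v ∈ G → v = 0 ∨ v = fun _ => 1 := by
      intro v hv
      rcases ftwocases (v ⟨0, by omega⟩) with h | h
      · left; funext a; rw [Pi.zero_apply, hconst v hv a ⟨0, by omega⟩, h]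
      · right; funext a; rw [hconst v hv a ⟨0, by omega⟩, h]
    by_cases hone : tau (fun _ => (1 : Fin 2)) ∈ G
    · have hset : ∀ v : Fin m → Fin 2,
          tau v ∈ G ↔ v ∈ ({0, fun _ => 1} : Set (Fin m → Fin 2)) := by
        intro v
        constructor
        · intro hv
          rcases hsub v hv with rfl | rfl
          · exact Or.inl rfl
          · exact Or.inr rfl
        · rintro (rfl | rfl)
          · exact hP0
          · exact hone
      rw [Nat.card_congr (Equiv.subtypeEquivRight hset)]
      rw [Nat.card_coe_set_eq, Set.ncard_pair (by
        intro h
        have h0 := congrFun h ⟨0, by omega⟩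
        rw [Pi.zero_apply] at h0
        exact absurd h0 (by decide))]
      exact Or.inr (Or.inl rfl)
    · have hset : ∀ v : Fin m → Fin 2,
          tau v ∈ G ↔ v ∈ ({0} : Set (Fin m → Fin 2)) := by
        intro v
        constructor
        · intro hv
          rcases hsub v hv with rfl | rfl
          · rfl
          · exact absurd hv hone
        · rintro rfl; exact hP0
      rw [Nat.card_congr (Equiv.subtypeEquivRight hset)]
      rw [Nat.card_coe_set_eq, Set.ncard_singleton]
      exact Or.inl rfl
  · push_neg at hconst
    obtain ⟨v, hv, a, b, hab⟩ := hconst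
    have hnorm : ∀ x y : Fin 2, x ≠ y → (x = 1 ∧ y = 0) ∨ (x = 0 ∧ y = 1) := by decide
    -- wlog v a = 1, v b = 0
    obtain ⟨a, b, hab, ha, hb⟩ : ∃ a b : Fin m, a ≠ b ∧ v a = 1 ∧ v b = 0 := by
      rcases hnorm _ _ hab with ⟨h1, h2⟩ | ⟨h1, h2⟩
      · exact ⟨a, b, fun h => hab (by rw [h]), h1, h2⟩
      · exact ⟨b, a, fun h => hab (by rw [h]), h2, h1⟩
    have hc : ∃ c : Fin m, c ≠ a ∧ c ≠ b := by
      by_contra h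
      push_neg at h
      have hsub2 : (Finset.univ : Finset (Fin m)) ⊆ {a, b} := by
        intro c _
        simp only [Finset.mem_insert, Finset.mem_singleton]
        by_cases hca : c = a
        · exact Or.inl hca
        · exact Or.inr (h c hca)
      have hcard := Finset.card_le_card hsub2
      rw [Finset.card_univ, Fintype.card_fin, Finset.card_pair hab] at hcard
      omega
    obtain ⟨c, hca, hcb⟩ := hc
    have hw : tau (fun t => v (cyc a b c t)) ∈ G :=
      hmap (cyc a b c) (cyc_sign hab (Ne.symm hca)) v hv
    have hvw : tau (v + fun t => v (cyc a b c t)) ∈ G := hPadd _ _ hv hw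
    have hσa : cyc a b c a = b := cyc_apply_x hab (Ne.symm hcb)
    have hσb : cyc a b c b = c := cyc_apply_y hab
    have hσc : cyc a b c c = a := cyc_apply_z (Ne.symm hca) (Ne.symm hcb)
    have hσo : ∀ t, t ≠ a → t ≠ b → t ≠ c → cyc a b c t = t := by
      intro t h1 h2 h3
      exact cyc_apply_other h1 h2 h3
    have initial : ∃ x y : Fin m, x ≠ y ∧ tau (pr x y) ∈ G := by
      rcases ftwocases (v c) with hvc | hvc
      · refine ⟨a, c, Ne.symm hca, ?_⟩
        have heq : (v + fun t => v (cyc a b c t)) = pr a c := by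
          funext t
          show v t + v (cyc a b c t) = pr a c t
          by_cases h1 : t = a
          · subst h1
            rw [hσa, ha, hb, pr_apply_left (Ne.symm hca)]
            decide
          · by_cases h2 : t = b
            · subst h2
              rw [hσb, hb, hvc, pr_apply_other (Ne.symm hab) (fun h => hcb h.symm)]
              decide
            · by_cases h3 : t = c
              · subst h3
                rw [hσc, hvc, ha, pr_apply_right (Ne.symm hca)]
                decide
              · rw [hσo t h1 h2 h3, ftwo, pr_apply_other h1 h3]
        rwa [heq] at hvw
      · refine ⟨a, b, hab, ?_⟩
        have heq : (v + fun t => v (cyc a b c t)) = pr a b := by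
          funext t
          show v t + v (cyc a b c t) = pr a b t
          by_cases h1 : t = a
          · subst h1
            rw [hσa, ha, hb, pr_apply_left hab]
            decide
          · by_cases h2 : t = b
            · subst h2
              rw [hσb, hb, hvc, pr_apply_right hab]
              decide
            · by_cases h3 : t = c
              · subst h3
                rw [hσc, hvc, ha, pr_apply_other hca hcb]
                decide
              · rw [hσo t h1 h2 h3, ftwo, pr_apply_other h1 h2]
        rwa [heq] at hvw
    have hallpairs := hspread initial
    -- every even-sum vector is in G
    have hgen : ∀ n (u : Fin m → Fin 2),
        (Finset.univ.filter (fun t => u t = 1)).card = n → (∑ t, u t) = 0 →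
        tau u ∈ G := by
      intro n
      induction n using Nat.strong_induction_on with
      | _ n ih =>
        intro u hcard hsum
        by_cases hu0 : u = 0
        · subst hu0; exact hP0
        · have hone1 : ∀ x : Fin 2, x ≠ 1 → x = 0 := by decide
          have hx : ∃ x, u x = 1 := by
            by_contra h
            push_neg at h
            exact hu0 (funext fun t => hone1 _ (h t))
          obtain ⟨x, hx⟩ := hx
          have hy : ∃ y, y ≠ x ∧ u y = 1 := by
            by_contra h
            push_neg at h
            have hsum2 : ∑ t, u t = u x :=
              Finset.sum_eq_single x (fun t _ ht => hone1 _ (h t ht)) (by simp)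
            rw [hsum2, hx] at hsum
            exact absurd hsum (by decide)
          obtain ⟨y, hyx, hy⟩ := hy
          have hu' : u = (u + pr x y) + pr x y := by
            funext t
            exact (fadd (u t) (pr x y t)).symm
          have hsum' : (∑ t, (u + pr x y) t) = 0 := by
            show (∑ t, (u t + pr x y t)) = 0
            rw [Finset.sum_add_distrib, hsum, sum_pr (Ne.symm hyx), add_zero]
          have hfilt : Finset.univ.filter (fun t => (u + pr x y) t = 1)
              = (Finset.univ.filter (fun t => u t = 1)) \ {x, y} := by
            ext t
            simp only [Finset.mem_filter, Finset.mem_sdiff, Finset.mem_insert,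
              Finset.mem_singleton, Finset.mem_univ, true_and, Pi.add_apply]
            by_cases h1 : t = x
            · subst h1
              rw [hx, pr_apply_left (Ne.symm hyx)]
              simp
            · by_cases h2 : t = y
              · subst h2
                rw [hy, pr_apply_right (Ne.symm hyx)]
                simp
              · rw [pr_apply_other h1 h2, add_zero]
                simp [h1, h2]
          have hmem : ({x, y} : Finset (Fin m)) ⊆
              Finset.univ.filter (fun t => u t = 1) := by
            intro t ht
            rcases Finset.mem_insert.mp ht with rfl | ht2
            · simp [hx]
            · rw [Finset.mem_singleton] at ht2
              subst ht2
              simp [hy]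
          have hn2 : 2 ≤ n := by
            have := Finset.card_le_card hmem
            rw [hcard, Finset.card_pair (Ne.symm hyx)] at this
            exact this
          have hcard' : (Finset.univ.filter (fun t => (u + pr x y) t = 1)).card = n - 2 := by
            rw [hfilt, Finset.card_sdiff_of_subset hmem, hcard, Finset.card_pair (Ne.symm hyx)]
          have hrec := ih (n - 2) (by omega) (u + pr x y) hcard' hsum'
          rw [hu']
          exact hPadd _ _ hrec (hallpairs x y (Ne.symm hyx))
    by_cases hodd : ∃ u : Fin m → Fin 2, tau u ∈ G ∧ (∑ t, u t) = 1
    · -- everything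
      have hall : ∀ u : Fin m → Fin 2, tau u ∈ G := by
        intro u
        obtain ⟨w0, hw0, hw0s⟩ := hodd
        rcases ftwocases (∑ t, u t) with h | h
        · exact hgen _ u rfl h
        · have h2 : (∑ t, (u + w0) t) = 0 := by
            show (∑ t, (u t + w0 t)) = 0
            rw [Finset.sum_add_distrib, h, hw0s]
            decide
          have h3 := hgen _ (u + w0) rfl h2
          have h4 : u = (u + w0) + w0 := funext fun t => (fadd (u t) (w0 t)).symm
          rw [h4]
          exact hPadd _ _ h3 hw0
      rw [Nat.card_congr (Equiv.subtypeUnivEquiv hall)]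
      rw [Nat.card_eq_fintype_card]
      have : Fintype.card (Fin m → Fin 2) = 2 ^ m := by simp
      rw [this]
      exact Or.inr (Or.inr (Or.inr rfl))
    · push_neg at hodd
      have hiff : ∀ u : Fin m → Fin 2, tau u ∈ G ↔ (∑ t, u t) = 0 := by
        intro u
        constructor
        · intro hu
          rcases ftwocases (∑ t, u t) with h | h
          · exact h
          · exact absurd h (hodd u hu)
        · exact hgen _ u rfl
      rw [Nat.card_congr (Equiv.subtypeEquivRight hiff), card_sumzero (by omega)]
      exact Or.inr (Or.inr (Or.inl rfl))
end

section
/- Let m ≥ 3 and let G be a subgroup of Equiv.Perm (Fin m × Fin 2) all of whose elements are block-preserving, acting transitively on Fin m × Fin 2, and such that the image {f g : g ∈ G} equals alternatingGroup (Fin m). Let K = {g ∈ G : g is block-fixing}. Then: (a) if G contains a block-fixing element τ whose support has exactly 2 elements (a transposition fixing all blocks), then Nat.card K = 2^m; (b) if G contains a block-fixing element τ whose support has exactly 4 elements (a 2-transposition fixing all blocks), then 2^(m−1) ≤ Nat.card K. -/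
namespace Stmt6

variable {m : ℕ}

def Z (i : Fin 2) : ZMod 2 := i

def phi (g : Equiv.Perm (Fin m × Fin 2)) : Fin m → ZMod 2 := fun a => (g (a,0)).2

lemma z2 : ∀ x y : ZMod 2, x ≠ y → y = x + 1 := by decide

lemma apply_bp {g : Equiv.Perm (Fin m × Fin 2)} (hg : IsBlockPreserving g)
    (a : Fin m) (i : ZMod 2) : g (a, i) = ((g (a, 0)).1, phi g a + i) := by
  have hne : (g (a, 1)).2 ≠ (g (a, 0)).2 := by
    intro h
    have h2 : g (a, 1) = g (a, 0) := Prod.ext (hg a).symm h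
    have := g.injective h2
    simp [Prod.ext_iff] at this
  have h1 : g (a, 1) = ((g (a, 0)).1, phi g a + 1) := by
    refine Prod.ext (hg a).symm (z2 (phi g a) ((g (a,1)).2) (Ne.symm hne))
  have h0 : g (a, (0 : ZMod 2)) = ((g (a, 0)).1, phi g a + 0) := by
    show g (a, 0) = _
    refine Prod.ext rfl ?_
    show phi g a = phi g a + 0
    generalize phi g a = x; revert x; decide
  fin_cases i
  · exact h0
  · show g (a, 1) = _
    rw [h1]
    refine Prod.ext rfl ?_
    show phi g a + 1 = phi g a + _
    generalize phi g a = x; revert x; decide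

lemma bf_bp {g : Equiv.Perm (Fin m × Fin 2)} (hg : IsBlockFixing g) : IsBlockPreserving g :=
  fun a => (hg a 0).trans (hg a 1).symm

lemma apply_bf {g : Equiv.Perm (Fin m × Fin 2)} (hg : IsBlockFixing g)
    (a : Fin m) (i : ZMod 2) : g (a, i) = (a, phi g a + i) := by
  rw [apply_bp (bf_bp hg) a i]
  exact Prod.ext (hg a 0) rfl

end Stmt6

namespace Stmt6
variable {m : ℕ}

lemma bf_one : IsBlockFixing (1 : Equiv.Perm (Fin m × Fin 2)) := fun _ _ => rfl

lemma phi_one : phi (1 : Equiv.Perm (Fin m × Fin 2)) = 0 := rfl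

lemma bf_mul {g h : Equiv.Perm (Fin m × Fin 2)} (hg : IsBlockFixing g) (hh : IsBlockFixing h) :
    IsBlockFixing (g * h) := fun a i => by
  rw [Equiv.Perm.mul_apply, apply_bf hh a i]; exact hg a _

lemma phi_mul {g h : Equiv.Perm (Fin m × Fin 2)} (hg : IsBlockFixing g) (hh : IsBlockFixing h) :
    phi (g * h) = phi g + phi h := by
  funext a
  have : (g * h) (a, (0 : ZMod 2)) = (a, phi g a + (phi h a + 0)) := by
    rw [Equiv.Perm.mul_apply, apply_bf hh a 0]; exact apply_bf hg a _
  have h2 : phi (g * h) a = phi g a + (phi h a + 0) := congrArg Prod.snd this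
  rw [h2]; show _ = phi g a + phi h a
  generalize phi g a = x; generalize phi h a = y; revert x y; decide

lemma bf_inv {g : Equiv.Perm (Fin m × Fin 2)} (hg : IsBlockFixing g) :
    IsBlockFixing g⁻¹ := by
  intro a i
  have : g ((a : Fin m), (phi g a + Z i : ZMod 2)) = (a, i) := by
    rw [apply_bf hg]
    refine Prod.ext rfl ?_
    show phi g a + (phi g a + Z i) = Z i
    generalize phi g a = x; revert x; revert i; decide
  have h2 : g⁻¹ (a, i) = (a, phi g a + Z i) := by
    rw [← this]; exact g.symm_apply_apply _
  rw [h2]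

lemma phi_injOn {g h : Equiv.Perm (Fin m × Fin 2)} (hg : IsBlockFixing g) (hh : IsBlockFixing h)
    (he : phi g = phi h) : g = h := by
  ext x
  · obtain ⟨a, i⟩ := x
    rw [show g (a, i) = (a, phi g a + Z i) from apply_bf hg a (Z i),
      show h (a, i) = (a, phi h a + Z i) from apply_bf hh a (Z i), he]
  · obtain ⟨a, i⟩ := x
    rw [show g (a, i) = (a, phi g a + Z i) from apply_bf hg a (Z i),
      show h (a, i) = (a, phi h a + Z i) from apply_bf hh a (Z i), he]

lemma support_bf {g : Equiv.Perm (Fin m × Fin 2)} (hg : IsBlockFixing g) :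
    g.support = (Finset.univ.filter (fun a => phi g a = 1)) ×ˢ Finset.univ := by
  ext ⟨a, i⟩
  simp only [Equiv.Perm.mem_support, Finset.mem_product, Finset.mem_filter, Finset.mem_univ,
    true_and, and_true]
  constructor
  · intro hne
    by_contra h1
    have h0 : phi g a = 0 := by revert h1; generalize phi g a = x; revert x; decide
    apply hne
    rw [show g (a, i) = (a, phi g a + Z i) from apply_bf hg a (Z i), h0]
    refine Prod.ext rfl ?_
    show (0 : ZMod 2) + Z i = Z i
    clear hne; revert i; decide
  · intro h1 hne
    rw [show g (a, i) = (a, phi g a + Z i) from apply_bf hg a (Z i), h1]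
      at hne
    have h3 : (1 : ZMod 2) + Z i = Z i := congrArg Prod.snd hne
    revert h3; clear hne; revert i; decide

lemma support_card_bf {g : Equiv.Perm (Fin m × Fin 2)} (hg : IsBlockFixing g) :
    g.support.card = 2 * (Finset.univ.filter (fun a => phi g a = 1)).card := by
  rw [support_bf hg, Finset.card_product]
  simp [mul_comm]
end Stmt6

namespace Stmt6
variable {m : ℕ}

lemma conj_bf {g τ : Equiv.Perm (Fin m × Fin 2)} (hg : IsBlockPreserving g)
    (hginv : IsBlockPreserving g⁻¹) (hτ : IsBlockFixing τ) (a : Fin m) (i : ZMod 2) :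
    (g * τ * g⁻¹) (a, i) = (a, phi τ ((g⁻¹ (a, 0)).1) + i) := by
  set b := (g⁻¹ (a, 0)).1 with hb
  have h1 : g⁻¹ (a, i) = (b, phi g⁻¹ a + i) := apply_bp hginv a i
  have h2 : τ (b, phi g⁻¹ a + i) = (b, phi τ b + (phi g⁻¹ a + i)) := apply_bf hτ b _
  have h3 : g (b, phi τ b + (phi g⁻¹ a + i)) =
      ((g (b, 0)).1, phi g b + (phi τ b + (phi g⁻¹ a + i))) := apply_bp hg b _
  have h4 : g (b, phi g⁻¹ a + i) = (a, i) := by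
    exact (congrArg g h1.symm).trans (g.apply_symm_apply _)
  have h5 : g (b, phi g⁻¹ a + i) = ((g (b, 0)).1, phi g b + (phi g⁻¹ a + i)) := apply_bp hg b _
  have hfst : (g (b, 0)).1 = a := congrArg Prod.fst (h5.symm.trans h4)
  have hsnd : phi g b + (phi g⁻¹ a + i) = i := congrArg Prod.snd (h5.symm.trans h4)
  show g (τ (g⁻¹ (a, i))) = _
  erw [h1, h2, h3, hfst]
  refine Prod.ext rfl ?_
  show phi g b + (phi τ b + (phi g⁻¹ a + i)) = phi τ b + i
  have hcomm : phi g b + (phi τ b + (phi g⁻¹ a + i)) =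
      phi τ b + (phi g b + (phi g⁻¹ a + i)) := by ring
  rw [hcomm, hsnd]

lemma conj_bf' {g τ : Equiv.Perm (Fin m × Fin 2)} (hg : IsBlockPreserving g)
    (hginv : IsBlockPreserving g⁻¹) (hτ : IsBlockFixing τ) :
    IsBlockFixing (g * τ * g⁻¹) ∧ ∀ a, phi (g * τ * g⁻¹) a = phi τ ((g⁻¹ (a, 0)).1) := by
  constructor
  · intro a i
    have := conj_bf hg hginv hτ a (Z i)
    exact congrArg Prod.fst this
  · intro a
    have h := conj_bf hg hginv hτ a 0
    have h2 : phi (g * τ * g⁻¹) a = phi τ ((g⁻¹ (a, 0)).1) + 0 := congrArg Prod.snd h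
    rw [h2]; ring

lemma exists_third (hm : 3 ≤ m) (a b : Fin m) : ∃ c : Fin m, c ≠ a ∧ c ≠ b := by
  by_contra h
  push_neg at h
  have hsub : (Finset.univ : Finset (Fin m)) ⊆ {a, b} := by
    intro x _
    rcases eq_or_ne x a with rfl | hx
    · simp
    · simp [h x hx]
  have := Finset.card_le_card hsub
  have hle : ({a, b} : Finset (Fin m)).card ≤ 2 := Finset.card_insert_le _ _ |>.trans (by simp)
  simp only [Finset.card_univ, Fintype.card_fin] at this
  omega

lemma alt_trans (hm : 3 ≤ m) (b a : Fin m) :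
    ∃ π ∈ alternatingGroup (Fin m), π b = a := by
  rcases eq_or_ne b a with rfl | hba
  · exact ⟨1, one_mem _, rfl⟩
  · obtain ⟨c, hca, hcb⟩ := exists_third hm a b
    refine ⟨Equiv.swap b a * Equiv.swap a c, ?_, ?_⟩
    · rw [Equiv.Perm.mem_alternatingGroup, map_mul,
        Equiv.Perm.sign_swap hba, Equiv.Perm.sign_swap (Ne.symm hca)]
      decide
    · rw [Equiv.Perm.mul_apply, Equiv.swap_apply_of_ne_of_ne hba (Ne.symm hcb),
        Equiv.swap_apply_left]

lemma alt_pair (hm : 3 ≤ m) {b c a a' : Fin m} (hbc : b ≠ c) (haa : a ≠ a') :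
    ∃ π ∈ alternatingGroup (Fin m), (π b = a ∧ π c = a') ∨ (π b = a' ∧ π c = a) := by
  obtain ⟨σ, hσb, hσc⟩ : ∃ σ : Equiv.Perm (Fin m), σ b = a ∧ σ c = a' := by
    set σ1 := Equiv.swap b a with hσ1
    have h1 : σ1 b = a := Equiv.swap_apply_left b a
    have hc1a : σ1 c ≠ a := by
      intro h
      exact hbc (σ1.injective (h.trans h1.symm)).symm
    by_cases h2 : σ1 c = a'
    · exact ⟨σ1, h1, h2⟩
    · refine ⟨Equiv.swap (σ1 c) a' * σ1, ?_, ?_⟩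
      · rw [Equiv.Perm.mul_apply, h1, Equiv.swap_apply_of_ne_of_ne (Ne.symm hc1a) haa]
      · rw [Equiv.Perm.mul_apply, Equiv.swap_apply_left]
  rcases Int.units_eq_one_or (Equiv.Perm.sign σ) with hs | hs
  · exact ⟨σ, Equiv.Perm.mem_alternatingGroup.mpr hs, Or.inl ⟨hσb, hσc⟩⟩
  · refine ⟨σ * Equiv.swap b c, ?_, Or.inr ⟨?_, ?_⟩⟩
    · rw [Equiv.Perm.mem_alternatingGroup, map_mul, hs, Equiv.Perm.sign_swap hbc]
      decide
    · rw [Equiv.Perm.mul_apply, Equiv.swap_apply_left, hσc]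
    · rw [Equiv.Perm.mul_apply, Equiv.swap_apply_right, hσb]
end Stmt6

namespace Stmt6
variable {m : ℕ}

lemma zmod2_cases : ∀ x : ZMod 2, x ≠ 1 → x = 0 := by decide

def delta (b : Fin m) : Fin m → ZMod 2 := fun a => if a = b then 1 else 0

def Hsub (G : Subgroup (Equiv.Perm (Fin m × Fin 2))) : AddSubgroup (Fin m → ZMod 2) where
  carrier := {v | ∃ g ∈ G, IsBlockFixing g ∧ phi g = v}
  zero_mem' := ⟨1, one_mem G, bf_one, phi_one⟩
  add_mem' := by
    rintro v w ⟨g, hgG, hgbf, rfl⟩ ⟨h, hhG, hhbf, rfl⟩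
    exact ⟨g * h, mul_mem hgG hhG, bf_mul hgbf hhbf, phi_mul hgbf hhbf⟩
  neg_mem' := by
    rintro v ⟨g, hgG, hgbf, rfl⟩
    refine ⟨g, hgG, hgbf, ?_⟩
    funext a
    show phi g a = -(phi g a)
    generalize phi g a = x; revert x; decide

lemma card_K (G : Subgroup (Equiv.Perm (Fin m × Fin 2))) :
    Nat.card {g : Equiv.Perm (Fin m × Fin 2) // g ∈ G ∧ IsBlockFixing g} =
      Nat.card (Hsub G) := by
  apply Nat.card_congr
  refine Equiv.ofBijective (fun g => ⟨phi g.1, g.1, g.2.1, g.2.2, rfl⟩) ⟨?_, ?_⟩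
  · intro g h he
    have h2 : phi g.1 = phi h.1 := congrArg Subtype.val he
    exact Subtype.ext (phi_injOn g.2.2 h.2.2 h2)
  · rintro ⟨v, g, hgG, hgbf, rfl⟩
    exact ⟨⟨g, hgG, hgbf⟩, rfl⟩

lemma fst_apply {g : Equiv.Perm (Fin m × Fin 2)} (hg : IsBlockPreserving g)
    (p : Fin m × Fin 2) : (g p).1 = (g (p.1, 0)).1 := by
  have h : (g (p.1, Z p.2)).1 = (g (p.1, 0)).1 := by rw [apply_bp hg p.1 (Z p.2)]
  exact h

lemma conj_mem (G : Subgroup (Equiv.Perm (Fin m × Fin 2)))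
    (hBP : ∀ g ∈ G, IsBlockPreserving g)
    (hIm : {π : Equiv.Perm (Fin m) | ∃ g ∈ G, ∀ a, (g (a, 0)).1 = π a} =
      ↑(alternatingGroup (Fin m)))
    {τ : Equiv.Perm (Fin m × Fin 2)} (hτG : τ ∈ G) (hτ : IsBlockFixing τ)
    {π : Equiv.Perm (Fin m)} (hπ : π ∈ alternatingGroup (Fin m)) :
    ∃ τ' ∈ G, IsBlockFixing τ' ∧ ∀ a, phi τ' a = phi τ (π⁻¹ a) := by
  have hmem : π ∈ {π : Equiv.Perm (Fin m) | ∃ g ∈ G, ∀ a, (g (a, 0)).1 = π a} := by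
    rw [hIm]; exact hπ
  obtain ⟨g, hgG, hgf⟩ := hmem
  have hg' : IsBlockPreserving g := hBP g hgG
  have hginv : IsBlockPreserving g⁻¹ := hBP g⁻¹ (inv_mem hgG)
  have hfstinv : ∀ a, (g⁻¹ (a, 0)).1 = π⁻¹ a := by
    intro a
    apply π.injective
    have h1 : π ((g⁻¹ (a, 0)).1) = a :=
      calc π ((g⁻¹ (a, 0)).1) = (g ((g⁻¹ (a, 0)).1, 0)).1 := (hgf _).symm
        _ = (g (g⁻¹ (a, 0))).1 := (fst_apply hg' _).symm
        _ = a := congrArg Prod.fst (g.apply_symm_apply _)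
    rw [h1]; exact (π.apply_symm_apply a).symm
  obtain ⟨hbf, hphi⟩ := conj_bf' hg' hginv hτ
  exact ⟨g * τ * g⁻¹, mul_mem (mul_mem hgG hτG) (inv_mem hgG), hbf,
    fun a => by rw [hphi a, hfstinv a]⟩
end Stmt6

namespace Stmt6
variable {m : ℕ}

lemma delta_conj {b : Fin m} {π : Equiv.Perm (Fin m)} (a : Fin m) :
    delta b (π⁻¹ a) = delta (π b) a := by
  unfold delta
  by_cases h : π⁻¹ a = b
  · rw [if_pos h, if_pos (by rw [← h]; exact (π.apply_symm_apply a).symm)]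
  · rw [if_neg h, if_neg (fun hh => h (by rw [hh]; exact π.symm_apply_apply b))]

lemma phi_eq_delta {τ : Equiv.Perm (Fin m × Fin 2)} {b : Fin m}
    (h : ∀ a, phi τ a = 1 ↔ a = b) : phi τ = delta b := by
  funext a
  by_cases ha : a = b
  · rw [(h a).mpr ha, delta, if_pos ha]
  · rw [zmod2_cases _ (fun h1 => ha ((h a).mp h1)), delta, if_neg ha]

theorem main (hm : 3 ≤ m) (G : Subgroup (Equiv.Perm (Fin m × Fin 2)))
    (hBP : ∀ g ∈ G, IsBlockPreserving g)
    (hIm : {π : Equiv.Perm (Fin m) | ∃ g ∈ G, ∀ a, (g (a, 0)).1 = π a} =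
      ↑(alternatingGroup (Fin m))) :
    ((∃ τ ∈ G, IsBlockFixing τ ∧ τ.support.card = 2) →
      Nat.card {g : Equiv.Perm (Fin m × Fin 2) // g ∈ G ∧ IsBlockFixing g} = 2 ^ m) ∧
    ((∃ τ ∈ G, IsBlockFixing τ ∧ τ.support.card = 4) →
      2 ^ (m - 1) ≤
        Nat.card {g : Equiv.Perm (Fin m × Fin 2) // g ∈ G ∧ IsBlockFixing g}) := by
  constructor
  · -- part (a)
    rintro ⟨τ, hτG, hτbf, hτcard⟩
    rw [support_card_bf hτbf] at hτcard
    have hc1 : (Finset.univ.filter (fun a => phi τ a = 1)).card = 1 := by omega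
    obtain ⟨b, hb⟩ := Finset.card_eq_one.mp hc1
    have hphiτ : phi τ = delta b := by
      apply phi_eq_delta
      intro a
      constructor
      · intro h1
        have : a ∈ Finset.univ.filter (fun a => phi τ a = 1) := by
          simp [h1]
        rw [hb, Finset.mem_singleton] at this; exact this
      · intro h1
        have : a ∈ Finset.univ.filter (fun a => phi τ a = 1) := by
          rw [hb, Finset.mem_singleton]; exact h1
        simpa using this
    have hdelta : ∀ b' : Fin m, delta b' ∈ Hsub G := by
      intro b'
      obtain ⟨π, hπA, hπb⟩ := alt_trans hm b b'
      obtain ⟨τ', hτ'G, hτ'bf, hτ'phi⟩ := conj_mem G hBP hIm hτG hτbf hπA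
      refine ⟨τ', hτ'G, hτ'bf, ?_⟩
      funext a
      rw [hτ'phi a, hphiτ, delta_conj a, hπb]
    have htop : Hsub G = ⊤ := by
      ext v
      simp only [AddSubgroup.mem_top, iff_true]
      have hv : v = ∑ a ∈ Finset.univ.filter (fun a => v a = 1), delta a := by
        funext x
        rw [Finset.sum_apply]
        simp only [delta]
        rw [Finset.sum_ite_eq]
        simp only [Finset.mem_filter, Finset.mem_univ, true_and]
        by_cases hx : v x = 1
        · simp [hx]
        · simp [hx, zmod2_cases _ hx]
      rw [hv]
      exact AddSubgroup.sum_mem _ (fun a _ => hdelta a)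
    rw [card_K G, htop]
    rw [Nat.card_congr AddSubgroup.topEquiv.toEquiv, Nat.card_eq_fintype_card,
      Fintype.card_fun, ZMod.card, Fintype.card_fin]
  · -- part (b)
    rintro ⟨τ, hτG, hτbf, hτcard⟩
    rw [support_card_bf hτbf] at hτcard
    have hc2 : (Finset.univ.filter (fun a => phi τ a = 1)).card = 2 := by omega
    obtain ⟨b, c, hbc, hbcfil⟩ := Finset.card_eq_two.mp hc2
    have hmem1 : ∀ a, phi τ a = 1 ↔ (a = b ∨ a = c) := by
      intro a
      constructor
      · intro h1
        have : a ∈ Finset.univ.filter (fun a => phi τ a = 1) := by simp [h1]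
        rw [hbcfil] at this
        simpa using this
      · intro h1
        have : a ∈ ({b, c} : Finset (Fin m)) := by simpa using h1
        rw [← hbcfil] at this
        simpa using this
    have hphiτ : phi τ = delta b + delta c := by
      funext a
      rw [Pi.add_apply]
      by_cases hab : a = b
      · rw [(hmem1 a).mpr (Or.inl hab), delta, delta, if_pos hab,
          if_neg (by rw [hab]; exact hbc), add_zero]
      · by_cases hac : a = c
        · rw [(hmem1 a).mpr (Or.inr hac), delta, delta, if_neg hab, if_pos hac, zero_add]
        · have h0 : phi τ a = 0 := by
            apply zmod2_cases
            intro h1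
            rcases (hmem1 a).mp h1 with h | h
            · exact hab h
            · exact hac h
          rw [h0, delta, delta, if_neg hab, if_neg hac, add_zero]
    have hpair : ∀ a : {a : Fin m // a ≠ b}, delta b + delta a.1 ∈ Hsub G := by
      intro a
      obtain ⟨π, hπA, hor⟩ := alt_pair hm hbc (Ne.symm a.2)
      obtain ⟨τ', hτ'G, hτ'bf, hτ'phi⟩ := conj_mem G hBP hIm hτG hτbf hπA
      refine ⟨τ', hτ'G, hτ'bf, ?_⟩
      funext x
      rw [hτ'phi x, hphiτ, Pi.add_apply, delta_conj x, delta_conj x, Pi.add_apply]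
      rcases hor with ⟨h1, h2⟩ | ⟨h1, h2⟩
      · rw [h1, h2]
      · rw [h1, h2, add_comm]
    set F : ({a : Fin m // a ≠ b} → ZMod 2) → (Fin m → ZMod 2) := fun w =>
      ∑ a ∈ Finset.univ.filter (fun a : {a : Fin m // a ≠ b} => w a = 1),
        (delta b + delta a.1) with hF
    have hFmem : ∀ w, F w ∈ Hsub G := fun w => AddSubgroup.sum_mem _ (fun a _ => hpair a)
    have hFeval : ∀ w (a : {a : Fin m // a ≠ b}), F w a.1 = w a := by
      intro w a
      show (∑ a' ∈ Finset.univ.filter (fun a' : {a : Fin m // a ≠ b} => w a' = 1),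
        (delta b + delta a'.1)) a.1 = w a
      rw [Finset.sum_apply]
      have hterm : ∀ a' : {a : Fin m // a ≠ b},
          (delta b + delta a'.1) a.1 = if a = a' then (1 : ZMod 2) else 0 := by
        intro a'
        rw [Pi.add_apply]
        have h1 : delta b a.1 = 0 := by simp [delta, a.2]
        rw [h1, zero_add]
        show (if a.1 = a'.1 then (1 : ZMod 2) else 0) = _
        by_cases h : a = a'
        · rw [if_pos (congrArg Subtype.val h), if_pos h]
        · rw [if_neg (fun hh => h (Subtype.ext hh)), if_neg h]
      rw [Finset.sum_congr rfl (fun a' _ => hterm a'), Finset.sum_ite_eq]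
      simp only [Finset.mem_filter, Finset.mem_univ, true_and]
      by_cases hw : w a = 1
      · simp [hw]
      · simp [hw, zmod2_cases _ hw]
    have hFinj : Function.Injective (fun w => (⟨F w, hFmem w⟩ : Hsub G)) := by
      intro w w' he
      have he2 : F w = F w' := congrArg Subtype.val he
      funext a
      rw [← hFeval w a, ← hFeval w' a, he2]
    have hcard := Nat.card_le_card_of_injective _ hFinj
    rw [Nat.card_eq_fintype_card, Fintype.card_fun, ZMod.card] at hcard
    have hsub : Fintype.card {a : Fin m // a ≠ b} = m - 1 := by
      simp [Fintype.card_subtype_compl]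
    rw [hsub] at hcard
    rw [card_K G]
    exact hcard
end Stmt6

theorem stmt6 {m : ℕ} (hm : 3 ≤ m) (G : Subgroup (Equiv.Perm (Fin m × Fin 2)))
    (hBP : ∀ g ∈ G, IsBlockPreserving g)
    (htrans : MulAction.IsPretransitive ↥G (Fin m × Fin 2))
    -- the image of f equals Alt_m
    (hIm : {π : Equiv.Perm (Fin m) | ∃ g ∈ G, ∀ a, (g (a, 0)).1 = π a} =
      ↑(alternatingGroup (Fin m))) :
    ((∃ τ ∈ G, IsBlockFixing τ ∧ τ.support.card = 2) →
      Nat.card {g : Equiv.Perm (Fin m × Fin 2) // g ∈ G ∧ IsBlockFixing g} = 2 ^ m) ∧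
    ((∃ τ ∈ G, IsBlockFixing τ ∧ τ.support.card = 4) →
      2 ^ (m - 1) ≤
        Nat.card {g : Equiv.Perm (Fin m × Fin 2) // g ∈ G ∧ IsBlockFixing g}) := by
  exact Stmt6.main hm G hBP hIm
end

section
/- Let m ≥ 3, let H be either all of Equiv.Perm (Fin m) or the subgroup alternatingGroup (Fin m), and let W be the subgroup of Equiv.Perm (Fin m × Fin 2) consisting of all block-preserving permutations σ with f σ ∈ H (so W is isomorphic to the wreath product C₂ ≀ H). Let G ≤ W be a subgroup acting transitively on Fin m × Fin 2 whose image {f g : g ∈ G} equals H. Then: (a) the index of G in W belongs to {1, 2, 2^(m−1), 2^m}; (b) if the index of G in W equals 2^(m−1), then the permutation ε (which swaps the two points of every block) belongs to G; (c) if the index of G in W equals 2, then every block-fixing permutation σ with Equiv.Perm.sign σ = 1 belongs to G. -/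
lemma IsBlockPreserving.fst_apply {m : ℕ} {σ : Equiv.Perm (Fin m × Fin 2)}
    (hσ : IsBlockPreserving σ) (x : Fin m × Fin 2) : (σ x).1 = (σ (x.1, 0)).1 := by
  obtain ⟨a, i⟩ := x
  fin_cases i
  · rfl
  · exact (hσ a).symm

/-- The subgroup of `Equiv.Perm (Fin m × Fin 2)` of all block-preserving permutations
whose induced permutation of the blocks lies in `H`; this is the wreath product
`C₂ ≀ H`. -/
def blockW {m : ℕ} (H : Subgroup (Equiv.Perm (Fin m))) :
    Subgroup (Equiv.Perm (Fin m × Fin 2)) where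
  carrier := {σ | IsBlockPreserving σ ∧ ∃ π ∈ H, ∀ a, (σ (a, 0)).1 = π a}
  one_mem' := ⟨fun _ => rfl, 1, H.one_mem, fun _ => rfl⟩
  mul_mem' := by
    rintro σ τ ⟨hσ, πσ, hπσH, hπσ⟩ ⟨hτ, πτ, hπτH, hπτ⟩
    constructor
    · intro a
      have h1 : ((σ * τ) (a, 0)).1 = (σ ((τ (a, 0)).1, 0)).1 := hσ.fst_apply (τ (a, 0))
      have h2 : ((σ * τ) (a, 1)).1 = (σ ((τ (a, 1)).1, 0)).1 := hσ.fst_apply (τ (a, 1))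
      rw [h1, h2, hτ a]
    · refine ⟨πσ * πτ, H.mul_mem hπσH hπτH, fun a => ?_⟩
      have h1 : ((σ * τ) (a, 0)).1 = (σ ((τ (a, 0)).1, 0)).1 := hσ.fst_apply (τ (a, 0))
      rw [h1, hπσ, hπτ a]
      rfl
  inv_mem' := by
    rintro σ ⟨hσ, π, hπH, hπ⟩
    have key : ∀ (a : Fin m) (i : Fin 2), σ⁻¹ (a, i) = (π⁻¹ a, 0) ∨
        σ⁻¹ (a, i) = (π⁻¹ a, 1) := by
      intro a i
      have h0 : (σ (π⁻¹ a, 0)).1 = a := by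
        rw [hπ]; exact π.apply_symm_apply a
      have h1 : (σ (π⁻¹ a, 1)).1 = a := by rw [← hσ (π⁻¹ a)]; exact h0
      have hne : σ (π⁻¹ a, 0) ≠ σ (π⁻¹ a, 1) := by
        intro h
        have := σ.injective h
        simp at this
      have hsnd : (σ (π⁻¹ a, 0)).2 ≠ (σ (π⁻¹ a, 1)).2 := by
        intro h
        exact hne (Prod.ext (h0.trans h1.symm) h)
      have hi : i = (σ (π⁻¹ a, 0)).2 ∨ i = (σ (π⁻¹ a, 1)).2 := by
        have hi2 := i.isLt
        have ha2 := (σ (π⁻¹ a, 0)).2.isLt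
        have hb2 := (σ (π⁻¹ a, 1)).2.isLt
        have : (i : ℕ) = ((σ (π⁻¹ a, 0)).2 : ℕ) ∨ (i : ℕ) = ((σ (π⁻¹ a, 1)).2 : ℕ) := by
          have hne' : ((σ (π⁻¹ a, 0)).2 : ℕ) ≠ ((σ (π⁻¹ a, 1)).2 : ℕ) :=
            fun h => hsnd (Fin.ext h)
          omega
        exact this.imp (fun h => Fin.ext h) (fun h => Fin.ext h)
      rcases hi with hi | hi
      · left
        have : (a, i) = σ (π⁻¹ a, 0) := Prod.ext h0.symm hi
        rw [this, ← Equiv.Perm.mul_apply, inv_mul_cancel, Equiv.Perm.one_apply]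
      · right
        have : (a, i) = σ (π⁻¹ a, 1) := Prod.ext h1.symm hi
        rw [this, ← Equiv.Perm.mul_apply, inv_mul_cancel, Equiv.Perm.one_apply]
    have keyfst : ∀ (a : Fin m) (i : Fin 2), (σ⁻¹ (a, i)).1 = π⁻¹ a := by
      intro a i
      rcases key a i with h | h <;> rw [h]
    exact ⟨fun a => (keyfst a 0).trans (keyfst a 1).symm,
      π⁻¹, H.inv_mem hπH, fun a => keyfst a 0⟩

lemma perm_inv_apply_self' {α : Type*} (f : Equiv.Perm α) (x : α) : f⁻¹ (f x) = x :=
  Equiv.symm_apply_apply f x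

lemma perm_apply_inv_self' {α : Type*} (f : Equiv.Perm α) (x : α) : f (f⁻¹ x) = x :=
  Equiv.apply_symm_apply f x

section
variable {m : ℕ}

lemma fin2_add_self (x : Fin 2) : x + x = 0 := by revert x; decide

lemma fin2_ne_iff {x y : Fin 2} (h : x ≠ y) : x = y + 1 := by revert x y; decide

lemma fin2_succ_ne (x : Fin 2) : x + 1 ≠ x := by revert x; decide

lemma fin2_eq_zero_or_one (x : Fin 2) : x = 0 ∨ x = 1 := by revert x; decide

/-- the block-fixing permutation flipping block `a` iff `v a = 1`. -/
def eps (v : Fin m → Fin 2) : Equiv.Perm (Fin m × Fin 2) where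
  toFun x := (x.1, x.2 + v x.1)
  invFun x := (x.1, x.2 + v x.1)
  left_inv x := by
    simp only [add_assoc, fin2_add_self, add_zero]
  right_inv x := by
    simp only [add_assoc, fin2_add_self, add_zero]

@[simp] lemma eps_apply (v : Fin m → Fin 2) (x : Fin m × Fin 2) :
    eps v x = (x.1, x.2 + v x.1) := rfl

lemma eps_add (v w : Fin m → Fin 2) : eps (v + w) = eps v * eps w := by
  ext x : 1
  simp [eps_apply, add_assoc, add_comm (w x.1)]

@[simp] lemma eps_zero : eps (0 : Fin m → Fin 2) = 1 := by
  ext x : 1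
  simp [eps_apply]

lemma eps_injective : Function.Injective (eps (m := m)) := by
  intro v w h
  funext a
  have := congrArg (fun σ : Equiv.Perm (Fin m × Fin 2) => (σ (a, 0)).2) h
  simpa using this

lemma eps_isBlockFixing (v : Fin m → Fin 2) : IsBlockFixing (eps v) := fun _ _ => rfl

lemma IsBlockFixing.eq_eps {σ : Equiv.Perm (Fin m × Fin 2)} (h : IsBlockFixing σ) :
    σ = eps (fun a => (σ (a, 0)).2) := by
  ext ⟨a, i⟩ : 1
  refine Prod.ext (h a i) ?_
  show (σ (a, i)).2 = i + (σ (a, 0)).2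
  rcases fin2_eq_zero_or_one i with rfl | rfl
  · rw [zero_add]
  · have hne : σ (a, 1) ≠ σ (a, 0) := fun hc => by
      have := σ.injective hc; simp at this
    have h2 : (σ (a, 1)).2 ≠ (σ (a, 0)).2 := fun hc =>
      hne (Prod.ext ((h a 1).trans (h a 0).symm) hc)
    rw [fin2_ne_iff h2, add_comm]

lemma eps_single_eq_swap (a : Fin m) :
    eps (Pi.single a 1) = Equiv.swap (a, (0 : Fin 2)) (a, 1) := by
  ext ⟨b, i⟩ : 1
  rcases eq_or_ne b a with rfl | hb
  · rcases fin2_eq_zero_or_one i with rfl | rfl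
    · simp [eps_apply, Equiv.swap_apply_left]
    · simp [eps_apply, Equiv.swap_apply_right]
  · rw [Equiv.swap_apply_of_ne_of_ne (by simp [hb]) (by simp [hb])]
    simp [eps_apply, Pi.single_eq_of_ne hb]

/-- parity character -/
def chi (v : Fin m → Fin 2) : Fin 2 := ∑ a, v a

lemma chi_add (v w : Fin m → Fin 2) : chi (v + w) = chi v + chi w := by
  simp [chi, Finset.sum_add_distrib]

@[simp] lemma chi_zero : chi (0 : Fin m → Fin 2) = 0 := by simp [chi]

@[simp] lemma chi_single (a : Fin m) : chi (Pi.single a (1 : Fin 2)) = 1 := by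
  simp [chi, Finset.sum_pi_single']

def mu : Fin 2 → ℤˣ := fun x => if x = 0 then 1 else -1

lemma mu_add_one (x : Fin 2) : mu (x + 1) = - mu x := by revert x; decide

lemma sign_eps (v : Fin m → Fin 2) : Equiv.Perm.sign (eps v) = mu (chi v) := by
  suffices h : ∀ n (v : Fin m → Fin 2), (Finset.univ.filter (fun a => v a = 1)).card = n →
      Equiv.Perm.sign (eps v) = mu (chi v) from h _ v rfl
  intro n
  induction n with
  | zero =>
    intro v hv
    have : v = 0 := by
      funext a
      rcases fin2_eq_zero_or_one (v a) with h | h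
      · exact h
      · exact absurd (Finset.card_eq_zero.mp hv ▸ Finset.mem_filter.mpr ⟨Finset.mem_univ a, h⟩)
          (by simp)
    subst this
    simp [mu]
  | succ n ih =>
    intro v hv
    obtain ⟨a, ha⟩ : ∃ a, a ∈ Finset.univ.filter (fun a => v a = 1) :=
      Finset.card_pos.mp (hv ▸ n.succ_pos)
    have hva : v a = 1 := (Finset.mem_filter.mp ha).2
    have hvw : v = (v + Pi.single a 1) + Pi.single a 1 := by
      funext x
      simp [add_assoc, fin2_add_self]
    have hwcard : (Finset.univ.filter (fun b : Fin m => v b + (Pi.single a 1 : Fin m → Fin 2) b = 1)).card = n := by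
      have heq : Finset.univ.filter (fun b : Fin m => v b + (Pi.single a 1 : Fin m → Fin 2) b = 1)
          = (Finset.univ.filter (fun b => v b = 1)).erase a := by
        ext b
        rcases eq_or_ne b a with rfl | hb
        · simp [hva, fin2_add_self]
        · simp [Pi.single_eq_of_ne hb, hb]
      rw [heq, Finset.card_erase_of_mem ha, hv]
      omega
    calc Equiv.Perm.sign (eps v)
        = Equiv.Perm.sign (eps ((v + Pi.single a 1) + Pi.single a 1)) := by rw [← hvw]
      _ = mu (chi v) := by
          rw [eps_add, map_mul, ih (v + Pi.single a 1) hwcard, eps_single_eq_swap,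
            Equiv.Perm.sign_swap (by simp)]
          have : chi v = chi (v + Pi.single a 1) + 1 := by
            conv_lhs => rw [hvw]
            rw [chi_add, chi_single]
          rw [this, mu_add_one, mul_neg_one]

end
section
variable {m : ℕ}

lemma eps_mem_blockW (H : Subgroup (Equiv.Perm (Fin m))) (v : Fin m → Fin 2) :
    eps v ∈ blockW H := ⟨fun _ => rfl, 1, H.one_mem, fun _ => rfl⟩

/-- the induced permutation of the blocks -/
def FW (H : Subgroup (Equiv.Perm (Fin m))) : ↥(blockW H) →* Equiv.Perm (Fin m) where
  toFun σ :=
    { toFun := fun a => ((σ : Equiv.Perm (Fin m × Fin 2)) (a, 0)).1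
      invFun := fun a => (((σ : Equiv.Perm (Fin m × Fin 2)))⁻¹ (a, 0)).1
      left_inv := by
        intro a
        have hτ : IsBlockPreserving ((σ : Equiv.Perm (Fin m × Fin 2)))⁻¹ :=
          ((blockW H).inv_mem σ.2).1
        have h := hτ.fst_apply ((σ : Equiv.Perm (Fin m × Fin 2)) (a, 0))
        simp only at h ⊢
        rw [← h, perm_inv_apply_self']
      right_inv := by
        intro a
        have hσ : IsBlockPreserving (σ : Equiv.Perm (Fin m × Fin 2)) := σ.2.1
        have h := hσ.fst_apply (((σ : Equiv.Perm (Fin m × Fin 2)))⁻¹ (a, 0))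
        simp only at h ⊢
        rw [← h, perm_apply_inv_self'] }
  map_one' := Equiv.ext fun a => rfl
  map_mul' σ τ := by
    refine Equiv.ext fun a => ?_
    show ((σ : Equiv.Perm (Fin m × Fin 2)) ((τ : Equiv.Perm (Fin m × Fin 2)) (a, 0))).1
      = ((σ : Equiv.Perm (Fin m × Fin 2)) (((τ : Equiv.Perm (Fin m × Fin 2)) (a, 0)).1, 0)).1
    exact σ.2.1.fst_apply _

lemma FW_apply (H : Subgroup (Equiv.Perm (Fin m))) (σ : ↥(blockW H)) (a : Fin m) :
    FW H σ a = ((σ : Equiv.Perm (Fin m × Fin 2)) (a, 0)).1 := rfl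

lemma mem_ker_FW_iff (H : Subgroup (Equiv.Perm (Fin m))) (σ : ↥(blockW H)) :
    σ ∈ (FW H).ker ↔ IsBlockFixing (σ : Equiv.Perm (Fin m × Fin 2)) := by
  rw [MonoidHom.mem_ker, Equiv.ext_iff]
  constructor
  · intro h a i
    have h0 : ((σ : Equiv.Perm (Fin m × Fin 2)) (a, 0)).1 = a := h a
    have := σ.2.1.fst_apply (a, i)
    simp only at this
    rw [this, h0]
  · intro h a
    exact h a 0

lemma range_FW (H : Subgroup (Equiv.Perm (Fin m))) : (FW H).range = H := by
  ext π
  constructor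
  · rintro ⟨σ, rfl⟩
    obtain ⟨_, π', hπ'H, hπ'⟩ := σ.2
    have : FW H σ = π' := Equiv.ext fun a => hπ' a
    rwa [this]
  · intro hπ
    refine ⟨⟨Equiv.prodCongr π (Equiv.refl (Fin 2)), ⟨fun a => rfl, π, hπ, fun a => rfl⟩⟩, ?_⟩
    exact Equiv.ext fun a => rfl

def kerFWEquiv (H : Subgroup (Equiv.Perm (Fin m))) : ↥(FW H).ker ≃ (Fin m → Fin 2) where
  toFun σ := fun a => ((σ.1 : Equiv.Perm (Fin m × Fin 2)) (a, 0)).2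
  invFun v := ⟨⟨eps v, eps_mem_blockW H v⟩, by
    rw [mem_ker_FW_iff]; exact eps_isBlockFixing v⟩
  left_inv σ := by
    have h : IsBlockFixing (σ.1 : Equiv.Perm (Fin m × Fin 2)) := (mem_ker_FW_iff H σ.1).mp σ.2
    exact Subtype.ext (Subtype.ext h.eq_eps.symm)
  right_inv v := by
    funext a
    show ((eps v) (a, 0)).2 = v a
    simp

lemma card_blockW (H : Subgroup (Equiv.Perm (Fin m))) :
    Nat.card ↥(blockW H) = Nat.card ↥H * 2 ^ m := by
  have h1 := Subgroup.index_mul_card (FW H).ker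
  rw [Subgroup.index_ker, range_FW] at h1
  rw [← h1, Nat.card_congr (kerFWEquiv H)]
  simp [Nat.card_eq_fintype_card]

section G
variable (H : Subgroup (Equiv.Perm (Fin m))) (G : Subgroup (Equiv.Perm (Fin m × Fin 2)))
  (hGW : G ≤ blockW H)

/-- the map `f` restricted to `G` -/
def Fg : ↥G →* Equiv.Perm (Fin m) := (FW H).comp (Subgroup.inclusion hGW)

lemma Fg_apply (g : ↥G) (a : Fin m) :
    Fg H G hGW g a = ((g : Equiv.Perm (Fin m × Fin 2)) (a, 0)).1 := rfl

lemma range_Fg (hIm : {π : Equiv.Perm (Fin m) | ∃ g ∈ G, ∀ a, (g (a, 0)).1 = π a} = ↑H) :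
    (Fg H G hGW).range = H := by
  apply SetLike.coe_injective
  rw [← hIm]
  ext π
  constructor
  · rintro ⟨g, rfl⟩
    exact ⟨g.1, g.2, fun a => rfl⟩
  · rintro ⟨g, hg, hga⟩
    exact ⟨⟨g, hg⟩, Equiv.ext fun a => hga a⟩

def kerFgEquiv : ↥(Fg H G hGW).ker ≃ {v : Fin m → Fin 2 // eps v ∈ G} where
  toFun g := ⟨fun a => ((g.1 : Equiv.Perm (Fin m × Fin 2)) (a, 0)).2, by
    have h : IsBlockFixing (g.1 : Equiv.Perm (Fin m × Fin 2)) :=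
      (mem_ker_FW_iff H (Subgroup.inclusion hGW g.1)).mp g.2
    rw [← h.eq_eps]
    exact g.1.2⟩
  invFun v := ⟨⟨eps v.1, v.2⟩, by
    have : Subgroup.inclusion hGW ⟨eps v.1, v.2⟩ ∈ (FW H).ker := by
      rw [mem_ker_FW_iff]; exact eps_isBlockFixing v.1
    exact this⟩
  left_inv g := by
    have h : IsBlockFixing (g.1 : Equiv.Perm (Fin m × Fin 2)) :=
      (mem_ker_FW_iff H (Subgroup.inclusion hGW g.1)).mp g.2
    exact Subtype.ext (Subtype.ext h.eq_eps.symm)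
  right_inv v := by
    apply Subtype.ext
    funext a
    show ((eps v.1) (a, 0)).2 = v.1 a
    simp

include hGW in
lemma card_G (hIm : {π : Equiv.Perm (Fin m) | ∃ g ∈ G, ∀ a, (g (a, 0)).1 = π a} = ↑H) :
    Nat.card ↥G = Nat.card ↥H * Nat.card {v : Fin m → Fin 2 // eps v ∈ G} := by
  have h1 := Subgroup.index_mul_card (Fg H G hGW).ker
  rw [Subgroup.index_ker, range_Fg H G hGW hIm] at h1
  rw [← h1, Nat.card_congr (kerFgEquiv H G hGW)]

include hGW in
lemma relindex_mul_cardA (hIm : {π : Equiv.Perm (Fin m) | ∃ g ∈ G, ∀ a, (g (a, 0)).1 = π a} = ↑H) :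
    G.relIndex (blockW H) * Nat.card {v : Fin m → Fin 2 // eps v ∈ G} = 2 ^ m := by
  have h1 : G.relIndex (blockW H) * Nat.card ↥G = Nat.card ↥(blockW H) := by
    have := Subgroup.index_mul_card (G.subgroupOf (blockW H))
    rwa [Nat.card_congr (Subgroup.subgroupOfEquivOfLe hGW).toEquiv] at this
  rw [card_G H G hGW hIm, card_blockW] at h1
  have hH : 0 < Nat.card ↥H := Nat.card_pos
  apply Nat.eq_of_mul_eq_mul_left hH
  rw [← h1]; ring

end G
end
section
variable {m : ℕ}

lemma conj_eps {H : Subgroup (Equiv.Perm (Fin m))} {g : Equiv.Perm (Fin m × Fin 2)}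
    (hg : g ∈ blockW H) {π : Equiv.Perm (Fin m)} (hπ : ∀ a, (g (a, 0)).1 = π a)
    (v : Fin m → Fin 2) :
    g * eps v * g⁻¹ = eps (v ∘ ⇑π⁻¹) := by
  have hfst : ∀ x : Fin m × Fin 2, (g x).1 = π x.1 := fun x =>
    (hg.1.fst_apply x).trans (hπ x.1)
  refine Equiv.ext fun x => ?_
  show g (eps v (g⁻¹ x)) = eps (v ∘ ⇑π⁻¹) x
  have hgy : g (g⁻¹ x) = x := perm_apply_inv_self' g x
  have hxy : (g⁻¹ x).1 = π⁻¹ x.1 := by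
    have h := hfst (g⁻¹ x)
    rw [hgy] at h
    rw [h, perm_inv_apply_self']
  rcases fin2_eq_zero_or_one (v ((g⁻¹ x).1)) with h0 | h1
  · have he : eps v (g⁻¹ x) = g⁻¹ x := by
      rw [eps_apply, h0, add_zero]
    rw [he, hgy, eps_apply]
    have : v (π⁻¹ x.1) = 0 := by rw [← hxy]; exact h0
    show x = (x.1, x.2 + v (π⁻¹ x.1))
    rw [this, add_zero]
  · have he : eps v (g⁻¹ x) = ((g⁻¹ x).1, (g⁻¹ x).2 + 1) := by rw [eps_apply, h1]
    have hfst2 : (g ((g⁻¹ x).1, (g⁻¹ x).2 + 1)).1 = x.1 := by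
      rw [hfst ((g⁻¹ x).1, (g⁻¹ x).2 + 1)]
      show π (g⁻¹ x).1 = x.1
      rw [hxy, perm_apply_inv_self']
    have hne : g ((g⁻¹ x).1, (g⁻¹ x).2 + 1) ≠ x := by
      conv_rhs => rw [← hgy]
      intro hc
      have := g.injective hc
      have h2 := congrArg Prod.snd this
      exact fin2_succ_ne _ h2
    have hsnd : (g ((g⁻¹ x).1, (g⁻¹ x).2 + 1)).2 = x.2 + 1 := by
      refine fin2_ne_iff fun hc => hne (Prod.ext hfst2 hc)
    rw [he, eps_apply]
    show g ((g⁻¹ x).1, (g⁻¹ x).2 + 1) = (x.1, x.2 + v (π⁻¹ x.1))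
    have hv : v (π⁻¹ x.1) = 1 := by rw [← hxy]; exact h1
    rw [hv]
    exact Prod.ext hfst2 hsnd

/-- weight-two vector -/
def pair (p q : Fin m) : Fin m → Fin 2 := Pi.single p 1 + Pi.single q 1

lemma pair_comm (p q : Fin m) : pair p q = pair q p := add_comm _ _

lemma pair_apply_left {p q : Fin m} (h : p ≠ q) : pair p q p = 1 := by
  simp only [pair, Pi.add_apply, Pi.single_eq_same, Pi.single_eq_of_ne h, add_zero]

lemma pair_apply_right {p q : Fin m} (h : p ≠ q) : pair p q q = 1 := by
  rw [pair_comm]; exact pair_apply_left (Ne.symm h)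

lemma pair_apply_ne {p q x : Fin m} (hp : x ≠ p) (hq : x ≠ q) : pair p q x = 0 := by
  simp only [pair, Pi.add_apply, Pi.single_eq_of_ne hp, Pi.single_eq_of_ne hq, add_zero]

lemma chi_pair {p q : Fin m} (h : p ≠ q) : chi (pair p q) = 0 := by
  rw [pair, chi_add, chi_single, chi_single]
  decide

lemma comp_pair {p q a b : Fin m} (π : Equiv.Perm (Fin m)) (hp : π p = a) (hq : π q = b)
    (hpq : p ≠ q) : (pair a b) ∘ ⇑π = pair p q := by
  have hab : a ≠ b := by rw [← hp, ← hq]; exact fun hc => hpq (π.injective hc)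
  funext x
  rcases eq_or_ne x p with rfl | hxp
  · show pair a b (π x) = _
    rw [hp, pair_apply_left hab, pair_apply_left hpq]
  rcases eq_or_ne x q with rfl | hxq
  · show pair a b (π x) = _
    rw [hq, pair_apply_right hab, pair_apply_right hpq]
  · show pair a b (π x) = _
    rw [pair_apply_ne hxp hxq,
      pair_apply_ne (fun hc => hxp (π.injective (hc.trans hp.symm)))
        (fun hc => hxq (π.injective (hc.trans hq.symm)))]

end
section
variable {m : ℕ}

lemma exists_pair_mem (hm : 3 ≤ m) (A : Set (Fin m → Fin 2))
    (hadd : ∀ v ∈ A, ∀ w ∈ A, v + w ∈ A)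
    (hperm : ∀ π : Equiv.Perm (Fin m), π ∈ alternatingGroup (Fin m) →
      ∀ v ∈ A, (v ∘ ⇑π) ∈ A)
    {v : Fin m → Fin 2} (hv : v ∈ A) {a b : Fin m} (hva : v a = 1) (hvb : v b = 0) :
    ∃ p q : Fin m, p ≠ q ∧ pair p q ∈ A := by
  have hab : a ≠ b := fun hc => by rw [hc, hvb] at hva; exact absurd hva (by decide)
  obtain ⟨c, hc⟩ : ∃ c : Fin m, c ∉ ({a, b} : Finset (Fin m)) := by
    by_contra hcon
    push_neg at hcon
    have h1 : (Finset.univ : Finset (Fin m)).card ≤ ({a, b} : Finset (Fin m)).card :=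
      Finset.card_le_card fun x _ => hcon x
    have h2 : ({a, b} : Finset (Fin m)).card ≤ 2 :=
      (Finset.card_insert_le _ _).trans (by simp)
    simp only [Finset.card_univ, Fintype.card_fin] at h1
    omega
  simp only [Finset.mem_insert, Finset.mem_singleton, not_or] at hc
  obtain ⟨hca, hcb⟩ := hc
  set σ : Equiv.Perm (Fin m) := Equiv.swap a b * Equiv.swap a c with hσ
  have hσmem : σ ∈ alternatingGroup (Fin m) := by
    rw [Equiv.Perm.mem_alternatingGroup, hσ, map_mul,
      Equiv.Perm.sign_swap hab, Equiv.Perm.sign_swap (Ne.symm hca)]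
    decide
  have hσa : σ a = c := by
    rw [hσ, Equiv.Perm.mul_apply, Equiv.swap_apply_left,
      Equiv.swap_apply_of_ne_of_ne hca hcb]
  have hσb : σ b = a := by
    rw [hσ, Equiv.Perm.mul_apply,
      Equiv.swap_apply_of_ne_of_ne (Ne.symm hab) (fun h => hcb (h.symm)),
      Equiv.swap_apply_right]
  have hσc : σ c = b := by
    rw [hσ, Equiv.Perm.mul_apply, Equiv.swap_apply_right, Equiv.swap_apply_left]
  have hσx : ∀ x, x ≠ a → x ≠ b → x ≠ c → σ x = x := by
    intro x hxa hxb hxc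
    rw [hσ, Equiv.Perm.mul_apply, Equiv.swap_apply_of_ne_of_ne hxa hxc,
      Equiv.swap_apply_of_ne_of_ne hxa hxb]
  have hu : v + v ∘ ⇑σ ∈ A := hadd v hv _ (hperm σ hσmem v hv)
  have hux : ∀ x, (v + v ∘ ⇑σ) x = v x + v (σ x) := fun x => rfl
  rcases fin2_eq_zero_or_one (v c) with hvc | hvc
  · refine ⟨a, b, hab, ?_⟩
    have : v + v ∘ ⇑σ = pair a b := by
      funext x
      rcases eq_or_ne x a with rfl | hxa
      · rw [hux, hσa, hva, hvc, pair_apply_left hab]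
        try decide
      rcases eq_or_ne x b with rfl | hxb
      · rw [hux, hσb, hvb, hva, pair_apply_right hab]
        try decide
      rcases eq_or_ne x c with rfl | hxc
      · rw [hux, hσc, hvc, hvb, pair_apply_ne hca hcb]
        try decide
      · rw [hux, hσx x hxa hxb hxc, fin2_add_self, pair_apply_ne hxa hxb]
    rwa [this] at hu
  · refine ⟨b, c, fun h => hcb h.symm, ?_⟩
    have : v + v ∘ ⇑σ = pair b c := by
      funext x
      rcases eq_or_ne x a with rfl | hxa
      · rw [hux, hσa, hva, hvc, pair_apply_ne hab (Ne.symm hca)]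
        try decide
      rcases eq_or_ne x b with rfl | hxb
      · rw [hux, hσb, hvb, hva, pair_apply_left (fun h => hcb h.symm)]
        try decide
      rcases eq_or_ne x c with rfl | hxc
      · rw [hux, hσc, hvc, hvb, pair_apply_right (fun h => hcb h.symm)]
        try decide
      · rw [hux, hσx x hxa hxb hxc, fin2_add_self, pair_apply_ne hxb hxc]
    rwa [this] at hu

lemma all_pairs_mem (A : Set (Fin m → Fin 2))
    (hperm : ∀ π : Equiv.Perm (Fin m), π ∈ alternatingGroup (Fin m) →
      ∀ v ∈ A, (v ∘ ⇑π) ∈ A)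
    {a b : Fin m} (hab : a ≠ b) (hpab : pair a b ∈ A)
    {p q : Fin m} (hpq : p ≠ q) : pair p q ∈ A := by
  set q' := Equiv.swap p a q with hq'
  have hq'a : q' ≠ a := by
    rw [hq']
    rcases eq_or_ne q a with rfl | hqa
    · rw [Equiv.swap_apply_right]
      exact hpq
    · rw [Equiv.swap_apply_of_ne_of_ne hpq.symm hqa]
      exact hqa
  set π' : Equiv.Perm (Fin m) := Equiv.swap q' b * Equiv.swap p a with hπ'
  have hπ'p : π' p = a := by
    rw [hπ', Equiv.Perm.mul_apply, Equiv.swap_apply_left,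
      Equiv.swap_apply_of_ne_of_ne (Ne.symm hq'a) hab]
  have hπ'q : π' q = b := by
    rw [hπ', Equiv.Perm.mul_apply, ← hq', Equiv.swap_apply_left]
  rcases Int.units_eq_one_or (Equiv.Perm.sign π') with hs | hs
  · have hπmem : π' ∈ alternatingGroup (Fin m) := Equiv.Perm.mem_alternatingGroup.mpr hs
    have := hperm π' hπmem _ hpab
    rwa [comp_pair π' hπ'p hπ'q hpq] at this
  · set π : Equiv.Perm (Fin m) := π' * Equiv.swap p q with hπd
    have hπmem : π ∈ alternatingGroup (Fin m) := by
      rw [Equiv.Perm.mem_alternatingGroup, hπd, map_mul, hs, Equiv.Perm.sign_swap hpq]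
      decide
    have hπp : π p = b := by rw [hπd, Equiv.Perm.mul_apply, Equiv.swap_apply_left, hπ'q]
    have hπq : π q = a := by rw [hπd, Equiv.Perm.mul_apply, Equiv.swap_apply_right, hπ'p]
    have := hperm π hπmem _ (pair_comm a b ▸ hpab)
    rwa [comp_pair π hπp hπq hpq] at this

lemma even_mem (A : Set (Fin m → Fin 2))
    (h0 : (0 : Fin m → Fin 2) ∈ A)
    (hadd : ∀ v ∈ A, ∀ w ∈ A, v + w ∈ A)
    (hpairs : ∀ p q : Fin m, p ≠ q → pair p q ∈ A) :
    ∀ v : Fin m → Fin 2, chi v = 0 → v ∈ A := by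
  have key : ∀ n, ∀ v : Fin m → Fin 2,
      (Finset.univ.filter (fun x => v x = 1)).card = n → chi v = 0 → v ∈ A := by
    intro n
    induction n using Nat.strong_induction_on with
    | _ n ih =>
      intro v hn hchi
      rcases Nat.eq_zero_or_pos n with rfl | hpos
      · have : v = 0 := by
          funext x
          rcases fin2_eq_zero_or_one (v x) with h | h
          · exact h
          · exact absurd (Finset.card_eq_zero.mp hn ▸
              Finset.mem_filter.mpr ⟨Finset.mem_univ x, h⟩) (by simp)
        rwa [this]
      · obtain ⟨a, ha⟩ : ∃ a, a ∈ Finset.univ.filter (fun x => v x = 1) :=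
          Finset.card_pos.mp (hn ▸ hpos)
        have hva : v a = 1 := (Finset.mem_filter.mp ha).2
        obtain ⟨b, hba, hvb⟩ : ∃ b, b ≠ a ∧ v b = 1 := by
          by_contra hcon
          push_neg at hcon
          have : chi v = 1 := by
            rw [chi, Fintype.sum_eq_single a (fun b hb => ?_), hva]
            rcases fin2_eq_zero_or_one (v b) with h | h
            · exact h
            · exact absurd h (hcon b hb)
          rw [this] at hchi
          exact absurd hchi (by decide)
        have hmemb : b ∈ Finset.univ.filter (fun x => v x = 1) :=
          Finset.mem_filter.mpr ⟨Finset.mem_univ b, hvb⟩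
        have hw : v + pair a b ∈ A → v ∈ A := by
          intro h
          have : (v + pair a b) + pair a b = v := by
            funext x
            show v x + pair a b x + pair a b x = v x
            rw [add_assoc, fin2_add_self, add_zero]
          exact this ▸ hadd _ h _ (hpairs a b (Ne.symm hba))
        have hset : Finset.univ.filter (fun x : Fin m => (v + pair a b) x = 1)
            = (Finset.univ.filter (fun x => v x = 1)) \ {a, b} := by
          ext x
          simp only [Finset.mem_filter, Finset.mem_univ, true_and, Finset.mem_sdiff,
            Finset.mem_insert, Finset.mem_singleton, not_or]
          rcases eq_or_ne x a with rfl | hxa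
          · exact iff_of_false (by
              show ¬ (v x + pair x b x = 1)
              rw [hva, pair_apply_left (Ne.symm hba)]
              decide) (fun h => h.2.1 rfl)
          rcases eq_or_ne x b with rfl | hxb
          · exact iff_of_false (by
              show ¬ (v x + pair a x x = 1)
              rw [hvb, pair_apply_right (Ne.symm hba)]
              decide) (fun h => h.2.2 rfl)
          · have : (v + pair a b) x = v x := by
              show v x + pair a b x = v x
              rw [pair_apply_ne hxa hxb, add_zero]
            rw [this]
            simp [hxa, hxb]
        have hlt : (Finset.univ.filter (fun x : Fin m => (v + pair a b) x = 1)).card < n := by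
          rw [hset, Finset.card_sdiff_of_subset (by
            intro x hx
            simp only [Finset.mem_insert, Finset.mem_singleton] at hx
            rcases hx with rfl | rfl
            · exact ha
            · exact hmemb)]
          have hcard2 : ({a, b} : Finset (Fin m)).card = 2 := by
            rw [Finset.card_insert_of_notMem (by simpa using Ne.symm hba),
              Finset.card_singleton]
          rw [hcard2, hn]
          omega
        have hchi2 : chi (v + pair a b) = 0 := by
          rw [chi_add, hchi, chi_pair (Ne.symm hba), add_zero]
        exact hw (ih _ hlt _ rfl hchi2)
  exact fun v => key _ v rfl
end
section
variable {m : ℕ}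

lemma card_chi_ker (hm : 1 ≤ m) :
    Nat.card {v : Fin m → Fin 2 // chi v = 0} = 2 ^ (m - 1) := by
  let χh : (Fin m → Fin 2) →+ Fin 2 :=
    { toFun := chi, map_zero' := chi_zero, map_add' := chi_add }
  have hsurj : Function.Surjective χh := by
    intro x
    rcases fin2_eq_zero_or_one x with rfl | rfl
    · exact ⟨0, chi_zero⟩
    · exact ⟨Pi.single ⟨0, by omega⟩ 1, chi_single _⟩
  have h1 := AddSubgroup.index_mul_card χh.ker
  rw [AddSubgroup.index_ker] at h1
  have hr : Nat.card χh.range = 2 := by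
    rw [AddMonoidHom.range_eq_top_of_surjective χh hsurj]
    rw [Nat.card_congr AddSubgroup.topEquiv.toEquiv]
    simp [Nat.card_eq_fintype_card]
  have h2 : Nat.card (Fin m → Fin 2) = 2 ^ m := by simp [Nat.card_eq_fintype_card]
  rw [hr, h2] at h1
  have h3 : Nat.card {v : Fin m → Fin 2 // chi v = 0} = Nat.card χh.ker :=
    Nat.card_congr (Equiv.subtypeEquivRight fun v => (AddMonoidHom.mem_ker (f := χh)).symm)
  rw [h3]
  have hpow : 2 ^ m = 2 * 2 ^ (m - 1) := by
    conv_lhs => rw [show m = (m - 1) + 1 by omega]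
    rw [pow_succ]
    ring
  omega

end
theorem stmt7 {m : ℕ} (hm : 3 ≤ m) (H : Subgroup (Equiv.Perm (Fin m)))
    (hH : H = ⊤ ∨ H = alternatingGroup (Fin m))
    (G : Subgroup (Equiv.Perm (Fin m × Fin 2)))
    (hGW : G ≤ blockW H)
    (htrans : MulAction.IsPretransitive ↥G (Fin m × Fin 2))
    -- the image of f on G equals H
    (hIm : {π : Equiv.Perm (Fin m) | ∃ g ∈ G, ∀ a, (g (a, 0)).1 = π a} = ↑H) :
    G.relIndex (blockW H) ∈ ({1, 2, 2 ^ (m - 1), 2 ^ m} : Set ℕ) ∧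
    (G.relIndex (blockW H) = 2 ^ (m - 1) →
      Equiv.prodCongr (Equiv.refl (Fin m)) (Equiv.swap (0 : Fin 2) 1) ∈ G) ∧
    (G.relIndex (blockW H) = 2 →
      ∀ σ : Equiv.Perm (Fin m × Fin 2), IsBlockFixing σ →
        Equiv.Perm.sign σ = 1 → σ ∈ G) := by
  classical
  set A : Set (Fin m → Fin 2) := {v | eps v ∈ G} with hAdef
  have h0A : (0 : Fin m → Fin 2) ∈ A := by
    show eps 0 ∈ G
    rw [eps_zero]
    exact G.one_mem
  have haddA : ∀ v ∈ A, ∀ w ∈ A, v + w ∈ A := fun v hv w hw => by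
    show eps (v + w) ∈ G
    rw [eps_add]
    exact G.mul_mem hv hw
  have hAltH : alternatingGroup (Fin m) ≤ H := by
    rcases hH with rfl | rfl
    · exact le_top
    · exact le_rfl
  have hpermA : ∀ π : Equiv.Perm (Fin m), π ∈ alternatingGroup (Fin m) →
      ∀ v ∈ A, v ∘ ⇑π ∈ A := by
    intro π hπ v hv
    have hπH : π⁻¹ ∈ ↑H := H.inv_mem (hAltH hπ)
    have hmem : π⁻¹ ∈ {π : Equiv.Perm (Fin m) | ∃ g ∈ G, ∀ a, (g (a, 0)).1 = π a} := by
      rw [hIm]; exact hπH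
    obtain ⟨g, hgG, hga⟩ := hmem
    have hconj := conj_eps (hGW hgG) hga v
    rw [inv_inv] at hconj
    show eps (v ∘ ⇑π) ∈ G
    rw [← hconj]
    exact G.mul_mem (G.mul_mem hgG hv) (G.inv_mem hgG)
  have hcount := relindex_mul_cardA H G hGW hIm
  set r := G.relIndex (blockW H) with hrdef
  have hbridge : Nat.card {v : Fin m → Fin 2 // eps v ∈ G} = A.ncard := by
    rw [← Nat.card_coe_set_eq]
    exact Nat.card_congr (Equiv.subtypeEquivRight fun v => Iff.rfl)
  rw [hbridge] at hcount
  have hApos : 1 ≤ A.ncard := by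
    rw [← Nat.card_coe_set_eq]
    haveI : Nonempty ↥A := ⟨⟨0, h0A⟩⟩
    exact Nat.card_pos
  have hpow : 2 ^ m = 2 ^ (m - 1) * 2 := by
    conv_lhs => rw [show m = (m - 1) + 1 by omega]
    rw [pow_succ]
  have hlt : 2 ^ (m - 1) < 2 ^ m := Nat.pow_lt_pow_right one_lt_two (by omega)
  have h8 : 8 ≤ 2 ^ m := by
    calc (8 : ℕ) = 2 ^ 3 := by norm_num
    _ ≤ 2 ^ m := Nat.pow_le_pow_right (by norm_num) hm
  by_cases hsmall : ∀ v ∈ A, v = 0 ∨ v = fun _ => 1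
  · -- A ⊆ {0, 1}
    have hsub : A ⊆ {0, fun _ => 1} := fun v hv => by
      rcases hsmall v hv with rfl | rfl
      · exact Set.mem_insert _ _
      · exact Set.mem_insert_of_mem _ rfl
    have hcA2 : A.ncard ≤ 2 := by
      calc A.ncard ≤ ({0, fun _ => 1} : Set (Fin m → Fin 2)).ncard :=
            Set.ncard_le_ncard hsub (Set.toFinite _)
        _ ≤ ({fun _ => 1} : Set (Fin m → Fin 2)).ncard + 1 := Set.ncard_insert_le _ _
        _ = 2 := by rw [Set.ncard_singleton]
    refine ⟨?_, ?_, ?_⟩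
    · have h12 : A.ncard = 1 ∨ A.ncard = 2 := by omega
      rcases h12 with h | h
      · rw [h, mul_one] at hcount
        simp only [Set.mem_insert_iff, Set.mem_singleton_iff]
        tauto
      · rw [h] at hcount
        have : r = 2 ^ (m - 1) := by
          apply Nat.eq_of_mul_eq_mul_right (show 0 < 2 by norm_num)
          rw [hcount, hpow]
        simp only [Set.mem_insert_iff, Set.mem_singleton_iff]
        tauto
    · intro hr
      have hones : (fun _ => (1 : Fin 2)) ∈ A := by
        by_contra hno
        have hsub1 : A ⊆ {0} := fun v hv => by
          rcases hsmall v hv with rfl | rfl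
          · rfl
          · exact absurd hv hno
        have : A.ncard ≤ 1 := by
          calc A.ncard ≤ ({0} : Set (Fin m → Fin 2)).ncard :=
                Set.ncard_le_ncard hsub1 (Set.toFinite _)
            _ = 1 := Set.ncard_singleton _
        have hA1 : A.ncard = 1 := le_antisymm this hApos
        rw [hA1, mul_one, hr] at hcount
        omega
      have hε : Equiv.prodCongr (Equiv.refl (Fin m)) (Equiv.swap (0 : Fin 2) 1)
          = eps (fun _ => 1) := by
        refine Equiv.ext fun x => ?_
        have hsw : ∀ j : Fin 2, Equiv.swap (0 : Fin 2) 1 j = j + 1 := by decide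
        show (x.1, Equiv.swap (0 : Fin 2) 1 x.2) = (x.1, x.2 + 1)
        rw [hsw]
      rw [hε]
      exact hones
    · intro hr
      rw [hr] at hcount
      omega
  · -- A contains a vector with both values
    push_neg at hsmall
    obtain ⟨v, hvA, hv0, hv1⟩ := hsmall
    obtain ⟨a, hva⟩ : ∃ a, v a = 1 := by
      obtain ⟨a, ha⟩ := Function.ne_iff.mp hv0
      refine ⟨a, ?_⟩
      rcases fin2_eq_zero_or_one (v a) with h | h
      · exact absurd h ha
      · exact h
    obtain ⟨b, hvb⟩ : ∃ b, v b = 0 := by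
      obtain ⟨b, hb⟩ := Function.ne_iff.mp hv1
      refine ⟨b, ?_⟩
      rcases fin2_eq_zero_or_one (v b) with h | h
      · exact h
      · exact absurd h hb
    obtain ⟨p, q, hpq, hpairA⟩ := exists_pair_mem hm A haddA hpermA hvA hva hvb
    have hpairs : ∀ p' q' : Fin m, p' ≠ q' → pair p' q' ∈ A := fun p' q' h =>
      all_pairs_mem A hpermA hpq hpairA h
    have hE : ∀ w : Fin m → Fin 2, chi w = 0 → w ∈ A := even_mem A h0A haddA hpairs
    -- three distinct elements of A
    have hcA3 : 3 ≤ A.ncard := by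
      set i0 : Fin m := ⟨0, by omega⟩
      set i1 : Fin m := ⟨1, by omega⟩
      set i2 : Fin m := ⟨2, by omega⟩
      have h01 : i0 ≠ i1 := by simp [i0, i1, Fin.ext_iff]
      have h02 : i0 ≠ i2 := by simp [i0, i2, Fin.ext_iff]
      have h12 : i1 ≠ i2 := by simp [i1, i2, Fin.ext_iff]
      have hp1 : pair i0 i1 ∈ A := hpairs _ _ h01
      have hp2 : pair i0 i2 ∈ A := hpairs _ _ h02
      have hne1 : pair i0 i1 ≠ pair i0 i2 := fun hc => by
        have := congrFun hc i1
        rw [pair_apply_right h01, pair_apply_ne (Ne.symm h01) h12] at this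
        exact absurd this (by decide)
      have hne2 : (0 : Fin m → Fin 2) ≠ pair i0 i1 := fun hc => by
        have := congrFun hc i0
        rw [pair_apply_left h01, Pi.zero_apply] at this
        exact absurd this (by decide)
      have hne3 : (0 : Fin m → Fin 2) ≠ pair i0 i2 := fun hc => by
        have := congrFun hc i0
        rw [pair_apply_left h02, Pi.zero_apply] at this
        exact absurd this (by decide)
      have hsub3 : ({0, pair i0 i1, pair i0 i2} : Set (Fin m → Fin 2)) ⊆ A := by
        intro w hw
        rcases hw with rfl | rfl | rfl
        · exact h0A
        · exact hp1
        · exact hp2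
      have hcard3 : ({0, pair i0 i1, pair i0 i2} : Set (Fin m → Fin 2)).ncard = 3 := by
        rw [Set.ncard_insert_of_notMem (by
            simp only [Set.mem_insert_iff, Set.mem_singleton_iff]
            push_neg
            exact ⟨hne2, hne3⟩),
          Set.ncard_insert_of_notMem (by simpa using hne1), Set.ncard_singleton]
      calc 3 = ({0, pair i0 i1, pair i0 i2} : Set (Fin m → Fin 2)).ncard := hcard3.symm
        _ ≤ A.ncard := Set.ncard_le_ncard hsub3 (Set.toFinite _)
    have hpart3 : ∀ σ : Equiv.Perm (Fin m × Fin 2), IsBlockFixing σ →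
        Equiv.Perm.sign σ = 1 → σ ∈ G := by
      intro σ hbf hsign
      rw [hbf.eq_eps, sign_eps] at hsign
      have hchi : chi (fun a => (σ (a, 0)).2) = 0 := by
        rcases fin2_eq_zero_or_one (chi (fun a => (σ (a, 0)).2)) with h | h
        · exact h
        · rw [h] at hsign
          exact absurd hsign (by decide)
      have := hE _ hchi
      rw [hbf.eq_eps]
      exact this
    refine ⟨?_, ?_, fun _ => hpart3⟩
    · by_cases hodd : ∃ w ∈ A, chi w = 1
      · -- A = univ
        obtain ⟨w0, hw0A, hw0⟩ := hodd
        have huniv : ∀ w : Fin m → Fin 2, w ∈ A := by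
          intro w
          rcases fin2_eq_zero_or_one (chi w) with h | h
          · exact hE w h
          · have hsum : w + w0 ∈ A := hE _ (by rw [chi_add, h, hw0]; decide)
            have : (w + w0) + w0 = w := by
              funext x
              show w x + w0 x + w0 x = w x
              rw [add_assoc, fin2_add_self, add_zero]
            exact this ▸ haddA _ hsum _ hw0A
        have hAuniv : A = Set.univ := Set.eq_univ_of_forall huniv
        have hcA : A.ncard = 2 ^ m := by
          rw [hAuniv, ← Nat.card_coe_set_eq,
            Nat.card_congr (Equiv.Set.univ (Fin m → Fin 2))]
          simp [Nat.card_eq_fintype_card]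
        rw [hcA] at hcount
        have : r = 1 := by
          apply Nat.eq_of_mul_eq_mul_right (show 0 < 2 ^ m from Nat.pow_pos (by norm_num))
          rw [hcount, one_mul]
        simp only [Set.mem_insert_iff, Set.mem_singleton_iff]
        tauto
      · -- A = E
        push_neg at hodd
        have hAE : A = {w : Fin m → Fin 2 | chi w = 0} := by
          apply Set.eq_of_subset_of_subset
          · intro w hw
            rcases fin2_eq_zero_or_one (chi w) with h | h
            · exact h
            · exact absurd h (hodd w hw)
          · exact hE
        have hcA : A.ncard = 2 ^ (m - 1) := by
          rw [hAE, ← Nat.card_coe_set_eq, ← card_chi_ker (by omega : 1 ≤ m)]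
          exact Nat.card_congr (Equiv.subtypeEquivRight fun w => Iff.rfl)
        rw [hcA] at hcount
        have : r = 2 := by
          apply Nat.eq_of_mul_eq_mul_right
            (show 0 < 2 ^ (m - 1) from Nat.pow_pos (by norm_num))
          rw [hcount, hpow]
          ring
        simp only [Set.mem_insert_iff, Set.mem_singleton_iff]
        tauto
    · intro hr
      rw [hr] at hcount
      exfalso
      have h2pos : 0 < 2 ^ (m - 1) := Nat.pow_pos (by norm_num)
      nlinarith [hcount, hcA3, hpow]
end
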